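/- arXiv:cs/0106036 — 5 statements merged into one kernel-verified Lean document; each statement's English description precedes it below -/
import Mathlib

section
/- (Upper bound on cumulative relative entropy) If ξ = Σ_i w_i μ_i with w_μ > 0 the weight of the true distribution μ ∈ M, then for every n, the cumulative expected conditional relative entropy H_n := Σ_{k=1}^n Σ_{x_{<k}} μ(x_{<k}) · Σ_{x_k} μ(x_k|x_{<k}) ln(μ(x_k|x_{<k})/ξ(x_k|x_{<k})) satisfies H_n = Σ_{x_{1:n}} μ(x_{1:n}) ln(μ(x_{1:n})/ξ(x_{1:n})) ≤ ln(1/w_μ). -/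
open scoped BigOperators

/-- Conditional probability ρ(a | l) := ρ(l·a)/ρ(l) via Bayes' rule. -/
noncomputable def condP {A : Type} [Fintype A] (ρ : List A → ℝ) (l : List A) (a : A) : ℝ :=
  ρ (l ++ [a]) / ρ l

/-- Cumulative expected conditional relative entropy H_n between μ and ξ. -/
noncomputable def relEnt {A : Type} [Fintype A] (μ ξ : List A → ℝ) (n : ℕ) : ℝ :=
  ∑ k ∈ Finset.range n, ∑ x : Fin k → A, μ (List.ofFn x) *
    ∑ a : A, condP μ (List.ofFn x) a * Real.log (condP μ (List.ofFn x) a / condP ξ (List.ofFn x) a)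

theorem ofFn_snoc' {A : Type} {n : ℕ} (y : Fin n → A) (a : A) :
    List.ofFn (Fin.snoc y a) = List.ofFn y ++ [a] := by
  rw [List.ofFn_succ']; simp [List.concat_eq_append]

theorem sum_snoc_split {A : Type} [Fintype A] (n : ℕ) (g : List A → ℝ) :
    ∑ x : Fin (n+1) → A, g (List.ofFn x)
      = ∑ y : Fin n → A, ∑ a : A, g (List.ofFn y ++ [a]) := by
  rw [← (Fin.snocEquiv (fun _ => A)).sum_comp (fun x => g (List.ofFn x)),
    Fintype.sum_prod_type, Finset.sum_comm]
  exact Finset.sum_congr rfl fun y _ => Finset.sum_congr rfl fun a _ => by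
    rw [show (Fin.snocEquiv (fun _ => A)) (a, y) = Fin.snoc y a from rfl, ofFn_snoc']

/-- Chain-rule step for a single prefix. -/
theorem chain_step {A : Type} [Fintype A] (μ ξ : List A → ℝ)
    (hμnn : ∀ l, 0 ≤ μ l) (hμc : ∀ l, ∑ a : A, μ (l ++ [a]) = μ l)
    (hdom : ∀ l, 0 < μ l → 0 < ξ l) (l : List A) :
    μ l * ∑ a : A, condP μ l a * Real.log (condP μ l a / condP ξ l a)
      = (∑ a : A, μ (l ++ [a]) * Real.log (μ (l ++ [a]) / ξ (l ++ [a])))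
        - μ l * Real.log (μ l / ξ l) := by
  by_cases hl : μ l = 0
  · have hz : ∀ a : A, μ (l ++ [a]) = 0 := by
      intro a
      have := (Finset.sum_eq_zero_iff_of_nonneg (fun a _ => hμnn (l ++ [a]))).1
        ((hμc l).trans hl) a (Finset.mem_univ a)
      exact this
    simp [hl, hz]
  · have hlpos : 0 < μ l := lt_of_le_of_ne (hμnn l) (Ne.symm hl)
    have hξl : 0 < ξ l := hdom l hlpos
    have key : ∀ a : A, μ l * (condP μ l a * Real.log (condP μ l a / condP ξ l a))
        = μ (l ++ [a]) * Real.log (μ (l ++ [a]) / ξ (l ++ [a]))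
          - μ (l ++ [a]) * Real.log (μ l / ξ l) := by
      intro a
      by_cases ha : μ (l ++ [a]) = 0
      · simp [ha, condP, hl]
      · have hapos : 0 < μ (l ++ [a]) := lt_of_le_of_ne (hμnn _) (Ne.symm ha)
        have hξa : 0 < ξ (l ++ [a]) := hdom _ hapos
        have h1 : Real.log (condP μ l a / condP ξ l a)
            = Real.log (μ (l ++ [a]) / ξ (l ++ [a])) - Real.log (μ l / ξ l) := by
          unfold condP
          rw [Real.log_div (by positivity) (by positivity),
            Real.log_div (by positivity) (by positivity),
            Real.log_div (by positivity) (by positivity),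
            Real.log_div (by positivity) (by positivity),
            Real.log_div (by positivity) (by positivity)]
          ring
        rw [h1]
        unfold condP
        field_simp
    calc μ l * ∑ a : A, condP μ l a * Real.log (condP μ l a / condP ξ l a)
        = ∑ a : A, μ l * (condP μ l a * Real.log (condP μ l a / condP ξ l a)) :=
          Finset.mul_sum _ _ _
      _ = ∑ a : A, (μ (l ++ [a]) * Real.log (μ (l ++ [a]) / ξ (l ++ [a]))
            - μ (l ++ [a]) * Real.log (μ l / ξ l)) :=
          Finset.sum_congr rfl fun a _ => key a
      _ = (∑ a : A, μ (l ++ [a]) * Real.log (μ (l ++ [a]) / ξ (l ++ [a])))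
            - (∑ a : A, μ (l ++ [a])) * Real.log (μ l / ξ l) := by
          rw [Finset.sum_sub_distrib, Finset.sum_mul]
      _ = _ := by rw [hμc l]

theorem telescoping {A : Type} [Fintype A] (μ ξ : List A → ℝ)
    (hμnn : ∀ l, 0 ≤ μ l) (hμc : ∀ l, ∑ a : A, μ (l ++ [a]) = μ l)
    (hdom : ∀ l, 0 < μ l → 0 < ξ l) (n : ℕ) :
    relEnt μ ξ n = (∑ x : Fin n → A, μ (List.ofFn x) *
        Real.log (μ (List.ofFn x) / ξ (List.ofFn x)))
      - μ [] * Real.log (μ [] / ξ []) := by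
  induction n with
  | zero => simp [relEnt]
  | succ n ih =>
    rw [relEnt, Finset.sum_range_succ, ← relEnt, ih,
      sum_snoc_split n (fun l => μ l * Real.log (μ l / ξ l))]
    have : ∑ x : Fin n → A, μ (List.ofFn x) *
        ∑ a : A, condP μ (List.ofFn x) a *
          Real.log (condP μ (List.ofFn x) a / condP ξ (List.ofFn x) a)
        = ∑ x : Fin n → A, ((∑ a : A, μ (List.ofFn x ++ [a]) *
            Real.log (μ (List.ofFn x ++ [a]) / ξ (List.ofFn x ++ [a])))
          - μ (List.ofFn x) * Real.log (μ (List.ofFn x) / ξ (List.ofFn x))) :=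
      Finset.sum_congr rfl fun x _ => chain_step μ ξ hμnn hμc hdom (List.ofFn x)
    rw [this, Finset.sum_sub_distrib]
    ring

theorem total_mass {A : Type} [Fintype A] (μ : List A → ℝ)
    (hμc : ∀ l, ∑ a : A, μ (l ++ [a]) = μ l) (n : ℕ) :
    ∑ x : Fin n → A, μ (List.ofFn x) = μ [] := by
  induction n with
  | zero => simp
  | succ n ih =>
    rw [sum_snoc_split n μ]
    simp_rw [hμc]
    exact ih

/-- Upper bound on the cumulative relative entropy: H_n equals the total KL divergence
between μ and ξ on length-n strings, and is bounded by ln(1/w_μ). -/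
theorem relEnt_eq_and_le {A : Type} [Fintype A]
    (μs : ℕ → List A → ℝ) (w : ℕ → ℝ)
    (hwpos : ∀ i, 0 < w i) (hwsum : HasSum w 1)
    (hnn : ∀ i l, 0 ≤ μs i l)
    (hroot : ∀ i, μs i [] = 1)
    (hcompat : ∀ i l, ∑ a : A, μs i (l ++ [a]) = μs i l)
    (ξ : List A → ℝ) (hξ : ∀ l, ξ l = ∑' i, w i * μs i l)
    (i0 : ℕ)
    (n : ℕ) :
    relEnt (μs i0) ξ n =
      (∑ x : Fin n → A, μs i0 (List.ofFn x) *
        Real.log (μs i0 (List.ofFn x) / ξ (List.ofFn x))) ∧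
    (∑ x : Fin n → A, μs i0 (List.ofFn x) *
        Real.log (μs i0 (List.ofFn x) / ξ (List.ofFn x))) ≤ Real.log (1 / w i0) := by
  -- every μs i is bounded by 1
  have hle1 : ∀ i l, μs i l ≤ 1 := by
    intro i l
    rw [← hroot i]
    induction l using List.reverseRecOn with
    | nil => exact le_rfl
    | append_singleton l a ih =>
      refine le_trans ?_ ih
      rw [← hcompat i l]
      exact Finset.single_le_sum (fun a' _ => hnn i (l ++ [a'])) (Finset.mem_univ a)
  have hsummable : ∀ l, Summable (fun i => w i * μs i l) := by
    intro l
    refine Summable.of_nonneg_of_le (fun i => mul_nonneg (hwpos i).le (hnn i l))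
      (fun i => ?_) hwsum.summable
    calc w i * μs i l ≤ w i * 1 := mul_le_mul_of_nonneg_left (hle1 i l) (hwpos i).le
      _ = w i := mul_one _
  have hξge : ∀ l, w i0 * μs i0 l ≤ ξ l := by
    intro l
    rw [hξ l]
    exact Summable.le_tsum (hsummable l) i0 (fun j _ => mul_nonneg (hwpos j).le (hnn j l))
  have hdom : ∀ l, 0 < μs i0 l → 0 < ξ l := fun l hl =>
    lt_of_lt_of_le (mul_pos (hwpos i0) hl) (hξge l)
  have hξroot : ξ [] = 1 := by
    rw [hξ []]
    simp_rw [hroot, mul_one]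
    exact hwsum.tsum_eq
  have heq : relEnt (μs i0) ξ n =
      ∑ x : Fin n → A, μs i0 (List.ofFn x) *
        Real.log (μs i0 (List.ofFn x) / ξ (List.ofFn x)) := by
    rw [telescoping (μs i0) ξ (hnn i0) (hcompat i0) hdom n, hroot i0, hξroot]
    simp
  refine ⟨heq, ?_⟩
  have hterm : ∀ x : Fin n → A, μs i0 (List.ofFn x) *
      Real.log (μs i0 (List.ofFn x) / ξ (List.ofFn x))
      ≤ μs i0 (List.ofFn x) * Real.log (1 / w i0) := by
    intro x
    set l := List.ofFn x
    by_cases hl : μs i0 l = 0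
    · simp [hl]
    · have hlpos : 0 < μs i0 l := lt_of_le_of_ne (hnn i0 l) (Ne.symm hl)
      have hξl : 0 < ξ l := hdom l hlpos
      have hratio : μs i0 l / ξ l ≤ 1 / w i0 := by
        rw [div_le_div_iff₀ hξl (hwpos i0)]
        calc μs i0 l * w i0 = w i0 * μs i0 l := mul_comm _ _
          _ ≤ ξ l := hξge l
          _ = 1 * ξ l := (one_mul _).symm
      exact mul_le_mul_of_nonneg_left
        (Real.log_le_log (div_pos hlpos hξl) hratio) (hnn i0 l)
  calc ∑ x : Fin n → A, μs i0 (List.ofFn x) *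
        Real.log (μs i0 (List.ofFn x) / ξ (List.ofFn x))
      ≤ ∑ x : Fin n → A, μs i0 (List.ofFn x) * Real.log (1 / w i0) :=
        Finset.sum_le_sum fun x _ => hterm x
    _ = (∑ x : Fin n → A, μs i0 (List.ofFn x)) * Real.log (1 / w i0) :=
        (Finset.sum_mul _ _ _).symm
    _ = Real.log (1 / w i0) := by rw [total_mass (μs i0) (hcompat i0) n, hroot i0, one_mul]
end

section
/- (Pointwise error-entropy inequality) Let y, z be probability vectors on {1,…,N}, let m maximize y and s maximize z, and let A > 0, B = A/4 + 1/A. Then (1 − y_s) ≤ (A+1)(1 − y_m) + (B+1)·Σ_{i=1}^N y_i ln(y_i/z_i). -/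
open scoped BigOperators

/-- Auxiliary function for the key logarithm inequality. -/
noncomputable def peeF (x : ℝ) : ℝ := Real.log x - (x-1)*(5*x+1)/(2*x*(x+2))

lemma peeF_hasDeriv {x : ℝ} (hx : 0 < x) :
    HasDerivAt peeF (4*(x-1)^3/(2*x*(x+2))^2) x := by
  have hx0 : x ≠ 0 := hx.ne'
  have hd0 : 2*x*(x+2) ≠ 0 := by positivity
  have h1 : HasDerivAt (fun y : ℝ => (y-1)*(5*y+1)) (1*(5*x+1) + (x-1)*5) x := by
    have ha : HasDerivAt (fun y : ℝ => y - 1) 1 x := (hasDerivAt_id x).sub_const 1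
    have hb : HasDerivAt (fun y : ℝ => 5*y+1) 5 x := by
      simpa using ((hasDerivAt_id x).const_mul (5:ℝ)).add_const 1
    exact ha.mul hb
  have h2 : HasDerivAt (fun y : ℝ => 2*y*(y+2)) (2*(x+2) + 2*x*1) x := by
    have ha : HasDerivAt (fun y : ℝ => 2*y) 2 x := by
      simpa using (hasDerivAt_id x).const_mul (2:ℝ)
    have hb : HasDerivAt (fun y : ℝ => y + 2) 1 x := (hasDerivAt_id x).add_const 2
    exact ha.mul hb
  have h3 := h1.div h2 hd0
  have h4 : HasDerivAt peeF _ x := (Real.hasDerivAt_log hx0).sub h3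
  convert h4 using 1
  field_simp
  ring

lemma peeF_one : peeF 1 = 0 := by
  simp [peeF]

lemma peeF_nonneg {p : ℝ} (hp : 0 < p) : 0 ≤ peeF p := by
  rcases le_or_gt 1 p with h1 | h1
  · have hmono : MonotoneOn peeF (Set.Ici 1) := by
      apply monotoneOn_of_deriv_nonneg (convex_Ici 1)
      · intro t ht
        have ht' : (0:ℝ) < t := lt_of_lt_of_le one_pos ht
        exact (peeF_hasDeriv ht').differentiableAt.continuousAt.continuousWithinAt
      · intro t ht
        rw [interior_Ici] at ht
        exact (peeF_hasDeriv (lt_trans one_pos ht)).differentiableAt.differentiableWithinAt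
      · intro t ht
        rw [interior_Ici] at ht
        rw [(peeF_hasDeriv (lt_trans one_pos ht)).deriv]
        have h2 : (0:ℝ) ≤ (t-1)^3 := by
          have : (0:ℝ) ≤ t - 1 := by linarith [ht.out]
          positivity
        positivity
    have := hmono Set.self_mem_Ici (show p ∈ Set.Ici 1 from h1) h1
    rw [peeF_one] at this
    exact this
  · have hanti : AntitoneOn peeF (Set.Ioc 0 1) := by
      apply antitoneOn_of_deriv_nonpos (convex_Ioc 0 1)
      · intro t ht
        exact (peeF_hasDeriv ht.1).differentiableAt.continuousAt.continuousWithinAt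
      · intro t ht
        rw [interior_Ioc] at ht
        exact (peeF_hasDeriv ht.1).differentiableAt.differentiableWithinAt
      · intro t ht
        rw [interior_Ioc] at ht
        rw [(peeF_hasDeriv ht.1).deriv]
        apply div_nonpos_of_nonpos_of_nonneg
        · have h2 : t - 1 ≤ 0 := by linarith [ht.2]
          nlinarith [sq_nonneg (t-1)]
        · positivity
    have := hanti (Set.mem_Ioc.2 ⟨hp, h1.le⟩) (Set.mem_Ioc.2 ⟨one_pos, le_refl 1⟩) h1.le
    rw [peeF_one] at this
    exact this

/-- Key scalar inequality: a sharp rational lower bound for the logarithm. -/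
lemma pee_key {p : ℝ} (hp : 0 < p) : (p-1)*(5*p+1) ≤ Real.log p * (2*p*(p+2)) := by
  have h := peeF_nonneg hp
  unfold peeF at h
  have hpos : (0:ℝ) < 2*p*(p+2) := by positivity
  rw [sub_nonneg, div_le_iff₀ hpos] at h
  exact h

/-- Pointwise Pinsker-type bound. -/
lemma pee_ptwise {a b : ℝ} (ha : 0 ≤ a) (hb : 0 ≤ b) (hab : b = 0 → a = 0) :
    (a - b)^2 ≤ (2*(a * Real.log (a/b) - a + b)) * ((a + 2*b)/3) ∧
    0 ≤ a * Real.log (a/b) - a + b := by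
  rcases eq_or_lt_of_le hb with hb0 | hb'
  · have hb0' : b = 0 := hb0.symm
    have ha0 : a = 0 := hab hb0'
    rw [ha0, hb0']
    norm_num
  · rcases eq_or_lt_of_le ha with ha0 | ha'
    · rw [← ha0, zero_div, Real.log_zero]
      constructor
      · nlinarith
      · nlinarith
    · have hb0 : b ≠ 0 := hb'.ne'
      have hp : 0 < a/b := div_pos ha' hb'
      have hkey := pee_key hp
      have h2 := mul_le_mul_of_nonneg_left hkey (le_of_lt (mul_pos hb' hb'))
      have h3 : b*b*((a/b-1)*(5*(a/b)+1)) = (a-b)*(5*a+b) := by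
        field_simp
      have h4 : b*b*(Real.log (a/b) * (2*(a/b)*((a/b)+2))) =
          Real.log (a/b) * (2*a*(a+2*b)) := by
        field_simp
      rw [h3, h4] at h2
      have habpos : (0:ℝ) < a + 2*b := by linarith
      constructor
      · nlinarith [h2]
      · nlinarith [h2, sq_nonneg (a-b), habpos]

/-- Pointwise error-entropy inequality: if m maximizes y and s maximizes z, then for
A > 0 and B = A/4 + 1/A one has 1 − y_s ≤ (A+1)(1 − y_m) + (B+1)·D(y‖z). -/
theorem pointwise_error_entropy {N : ℕ} (y z : Fin N → ℝ) (m s : Fin N)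
    (hy : ∀ i, 0 ≤ y i) (hz : ∀ i, 0 ≤ z i)
    (hys : ∑ i, y i = 1) (hzs : ∑ i, z i = 1)
    (hac : ∀ i, z i = 0 → y i = 0)
    (hm : ∀ i, y i ≤ y m) (hs : ∀ i, z i ≤ z s)
    (Ac Bc : ℝ) (hA : 0 < Ac) (hB : Bc = Ac / 4 + 1 / Ac) :
    1 - y s ≤ (Ac + 1) * (1 - y m) + (Bc + 1) * ∑ i, y i * Real.log (y i / z i) := by
  set D : ℝ := ∑ i, y i * Real.log (y i / z i) with hD
  have hB1 : (0:ℝ) < Bc + 1 := by rw [hB]; positivity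
  -- the weight functions
  set c : Fin N → ℝ := fun i => 2*(y i * Real.log (y i / z i) - y i + z i) with hc
  set w : Fin N → ℝ := fun i => (y i + 2*z i)/3 with hw
  have hptw : ∀ i, (y i - z i)^2 ≤ c i * w i ∧ 0 ≤ c i := by
    intro i
    have h := pee_ptwise (hy i) (hz i) (hac i)
    exact ⟨h.1, by simpa [hc] using mul_nonneg (by norm_num : (0:ℝ) ≤ 2) h.2⟩
  have hwnn : ∀ i, 0 ≤ w i := by
    intro i
    have := hy i; have := hz i
    simp only [hw]
    positivity
  have hsumc : ∑ i, c i = 2*D := by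
    simp only [hc]
    rw [← Finset.mul_sum, Finset.sum_add_distrib, Finset.sum_sub_distrib, hys, hzs, hD]
    ring
  have hsumw : ∑ i, w i = 1 := by
    simp only [hw]
    rw [← Finset.sum_div, Finset.sum_add_distrib, ← Finset.mul_sum, hys, hzs]
    norm_num
  -- Pinsker via Cauchy-Schwarz
  set S : ℝ := ∑ i, |y i - z i| with hS
  have hSnn : 0 ≤ S := Finset.sum_nonneg fun i _ => abs_nonneg _
  have hub : ∀ i, |y i - z i| ≤ Real.sqrt (c i) * Real.sqrt (w i) := by
    intro i
    calc |y i - z i| = Real.sqrt ((y i - z i)^2) := (Real.sqrt_sq_eq_abs _).symm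
      _ ≤ Real.sqrt (c i * w i) := Real.sqrt_le_sqrt (hptw i).1
      _ = Real.sqrt (c i) * Real.sqrt (w i) := Real.sqrt_mul (hptw i).2 _
  have hS1 : S ≤ ∑ i, Real.sqrt (c i) * Real.sqrt (w i) :=
    Finset.sum_le_sum fun i _ => hub i
  have hcs := Finset.sum_mul_sq_le_sq_mul_sq Finset.univ
    (fun i => Real.sqrt (c i)) (fun i => Real.sqrt (w i))
  have hcs1 : (∑ i, Real.sqrt (c i) * Real.sqrt (w i))^2 ≤ 2*D := by
    calc (∑ i, Real.sqrt (c i) * Real.sqrt (w i))^2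
        ≤ (∑ i, Real.sqrt (c i)^2) * (∑ i, Real.sqrt (w i)^2) := hcs
      _ = (∑ i, c i) * (∑ i, w i) := by
          rw [Finset.sum_congr rfl fun i _ => Real.sq_sqrt (hptw i).2,
            Finset.sum_congr rfl fun i _ => Real.sq_sqrt (hwnn i)]
      _ = 2*D := by rw [hsumc, hsumw, mul_one]
  have hSD : S^2 ≤ 2*D := by
    calc S^2 ≤ (∑ i, Real.sqrt (c i) * Real.sqrt (w i))^2 := by
          apply pow_le_pow_left₀ hSnn hS1
      _ ≤ 2*D := hcs1
  have hD0 : 0 ≤ D := by nlinarith [sq_nonneg S]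
  have hym1 : y m ≤ 1 := by
    rw [← hys]
    exact Finset.single_le_sum (fun i _ => hy i) (Finset.mem_univ m)
  by_cases hsm : s = m
  · subst hsm
    nlinarith [mul_nonneg hA.le (show (0:ℝ) ≤ 1 - y s by linarith),
      mul_nonneg hB1.le hD0]
  · -- s ≠ m
    have h0 : ∑ i, (y i - z i) = 0 := by
      rw [Finset.sum_sub_distrib, hys, hzs]; ring
    -- 2(y m - z m) ≤ S
    have hm2 : 2*(y m - z m) ≤ S := by
      have e1 : (y m - z m) + ∑ i ∈ Finset.univ.erase m, (y i - z i) = 0 := by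
        have := Finset.add_sum_erase Finset.univ (fun i => y i - z i) (Finset.mem_univ m)
        simpa [h0] using this
      have e2 : |y m - z m| + ∑ i ∈ Finset.univ.erase m, |y i - z i| = S := by
        have := Finset.add_sum_erase Finset.univ (fun i => |y i - z i|) (Finset.mem_univ m)
        rw [hS]
        simpa using this
      have e3 : ∑ i ∈ Finset.univ.erase m, (z i - y i)
          ≤ ∑ i ∈ Finset.univ.erase m, |y i - z i| :=
        Finset.sum_le_sum fun i _ => by rw [abs_sub_comm]; exact le_abs_self _
      have e4 : ∑ i ∈ Finset.univ.erase m, (z i - y i)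
          = -∑ i ∈ Finset.univ.erase m, (y i - z i) := by
        rw [← Finset.sum_neg_distrib]
        exact Finset.sum_congr rfl fun i _ => by ring
      have e5 := le_abs_self (y m - z m)
      linarith
    -- 2(z s - y s) ≤ S
    have hs2 : 2*(z s - y s) ≤ S := by
      have e1 : (y s - z s) + ∑ i ∈ Finset.univ.erase s, (y i - z i) = 0 := by
        have := Finset.add_sum_erase Finset.univ (fun i => y i - z i) (Finset.mem_univ s)
        simpa [h0] using this
      have e2 : |y s - z s| + ∑ i ∈ Finset.univ.erase s, |y i - z i| = S := by
        have := Finset.add_sum_erase Finset.univ (fun i => |y i - z i|) (Finset.mem_univ s)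
        rw [hS]
        simpa using this
      have e3 : ∑ i ∈ Finset.univ.erase s, (y i - z i)
          ≤ ∑ i ∈ Finset.univ.erase s, |y i - z i| :=
        Finset.sum_le_sum fun i _ => le_abs_self _
      have e5 : z s - y s ≤ |y s - z s| := by rw [abs_sub_comm]; exact le_abs_self _
      linarith
    -- z m ≤ 1/2
    have hzm : 2 * z m ≤ 1 := by
      have e1 : z m + z s = ∑ i ∈ ({m, s} : Finset (Fin N)), z i :=
        (Finset.sum_pair (fun h => hsm h.symm)).symm
      have e2 : ∑ i ∈ ({m, s} : Finset (Fin N)), z i ≤ ∑ i, z i :=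
        Finset.sum_le_sum_of_subset_of_nonneg (Finset.subset_univ _)
          (fun i _ _ => hz i)
      rw [hzs] at e2
      have := hs m
      linarith
    have hT : y m - y s ≤ S := by
      have := hs m
      linarith
    have hE : 1 - S ≤ 2*(1 - y m) := by linarith
    -- final algebra
    have h4 : (Ac+2)^2 = 4*Ac*(Bc+1) := by
      rw [hB]; field_simp; ring
    have hq : 0 ≤ (Bc+1)*S^2 - (Ac+2)*S + Ac := by
      nlinarith [sq_nonneg (2*(Bc+1)*S - (Ac+2)), h4, hB1, sq_nonneg S]
    have hAe : Ac*(1 - S) ≤ Ac*(2*(1 - y m)) := mul_le_mul_of_nonneg_left hE hA.le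
    have hBD : (Bc+1)*S^2 ≤ (Bc+1)*(2*D) := mul_le_mul_of_nonneg_left hSD hB1.le
    nlinarith [hAe, hBD, hq, hT]
end

section
/- (Linear error bound) For every A > 0 and B = A/4 + 1/A, the expected error counts satisfy E_{nΘ_ξ} ≤ (A+1)·E_{nΘ_μ} + (B+1)·H_n. -/
open Real

private lemma log_pade_lb {x : ℝ} (hx : 1 ≤ x) :
    3*(x^2-1)/(x^2+4*x+1) ≤ Real.log x := by
  set F : ℝ → ℝ := fun y => Real.log y - 3*(y^2-1)/(y^2+4*y+1) with hF
  have hd : ∀ y ∈ interior (Set.Ici (1:ℝ)), HasDerivAt F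
      (y⁻¹ - ((6*y)*(y^2+4*y+1) - (3*(y^2-1))*(2*y+4))/(y^2+4*y+1)^2) y := by
    intro y hy
    rw [interior_Ici] at hy
    have hy1 : (1:ℝ) < y := hy
    have hy0 : (0:ℝ) < y := by linarith
    have hden : y^2+4*y+1 ≠ 0 := by nlinarith
    have h1 : HasDerivAt Real.log y⁻¹ y := Real.hasDerivAt_log (ne_of_gt hy0)
    have hnum : HasDerivAt (fun y : ℝ => 3*(y^2-1)) (6*y) y := by
      have := ((hasDerivAt_pow 2 y).const_mul (3:ℝ)).sub_const 3
      have e1 : (fun y : ℝ => 3*(y^2-1)) = fun x => 3*x^2-3 := by funext z; ring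
      rw [e1]
      exact this.congr_deriv (by rw [show (2:ℕ) - 1 = 1 from rfl]; push_cast; ring)
    have hden' : HasDerivAt (fun y : ℝ => y^2+4*y+1) (2*y+4) y := by
      have := ((hasDerivAt_pow 2 y).add ((hasDerivAt_id y).const_mul (4:ℝ))).add_const 1
      exact this.congr_deriv (by rw [show (2:ℕ) - 1 = 1 from rfl]; push_cast; ring)
    exact h1.sub (hnum.div hden' hden)
  have hmono : MonotoneOn F (Set.Ici 1) := by
    apply monotoneOn_of_deriv_nonneg (convex_Ici 1)
    · apply ContinuousOn.sub
      · apply Real.continuousOn_log.mono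
        intro y hy
        simp only [Set.mem_Ici] at hy
        simp only [Set.mem_compl_iff, Set.mem_singleton_iff]
        intro h; rw [h] at hy; linarith
      · apply ContinuousOn.div
        · fun_prop
        · fun_prop
        · intro y hy
          simp only [Set.mem_Ici] at hy
          nlinarith
    · exact fun y hy => (hd y hy).differentiableAt.differentiableWithinAt
    · intro y hy
      rw [(hd y hy).deriv]
      have hy1 : (1:ℝ) < y := by rwa [interior_Ici] at hy
      have hy0 : (0:ℝ) < y := by linarith
      have hden : (0:ℝ) < (y^2+4*y+1)^2 := by positivity
      rw [sub_nonneg, div_le_iff₀ hden, inv_eq_one_div, div_mul_eq_mul_div, le_div_iff₀ hy0]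
      nlinarith [sq_nonneg ((y-1)^2), sq_nonneg (y-1)]
  have h2 := hmono (Set.self_mem_Ici) (Set.mem_Ici.2 hx) hx
  simp only [hF, Real.log_one] at h2
  norm_num at h2
  linarith

private lemma log_pade_ub {x : ℝ} (hx : 1 ≤ x) :
    Real.log x ≤ (x-1)*(x+5)/(2*(2*x+1)) := by
  set F : ℝ → ℝ := fun y => (y-1)*(y+5)/(2*(2*y+1)) - Real.log y with hF
  have hd : ∀ y ∈ interior (Set.Ici (1:ℝ)), HasDerivAt F
      (((2*y+4)*(2*(2*y+1)) - ((y-1)*(y+5))*4)/(2*(2*y+1))^2 - y⁻¹) y := by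
    intro y hy
    rw [interior_Ici] at hy
    have hy1 : (1:ℝ) < y := hy
    have hy0 : (0:ℝ) < y := by linarith
    have hden : 2*(2*y+1) ≠ 0 := by nlinarith
    have h1 : HasDerivAt Real.log y⁻¹ y := Real.hasDerivAt_log (ne_of_gt hy0)
    have hnum : HasDerivAt (fun y : ℝ => (y-1)*(y+5)) (2*y+4) y := by
      have := (((hasDerivAt_id y).sub_const 1).mul ((hasDerivAt_id y).add_const 5))
      exact this.congr_deriv (by simp only [id]; ring)
    have hden' : HasDerivAt (fun y : ℝ => 2*(2*y+1)) (4:ℝ) y := by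
      have := (((hasDerivAt_id y).const_mul (2:ℝ)).add_const 1).const_mul (2:ℝ)
      exact this.congr_deriv (by norm_num)
    exact (hnum.div hden' hden).sub h1
  have hmono : MonotoneOn F (Set.Ici 1) := by
    apply monotoneOn_of_deriv_nonneg (convex_Ici 1)
    · apply ContinuousOn.sub
      · apply ContinuousOn.div
        · fun_prop
        · fun_prop
        · intro y hy
          simp only [Set.mem_Ici] at hy
          nlinarith
      · apply Real.continuousOn_log.mono
        intro y hy
        simp only [Set.mem_Ici] at hy
        simp only [Set.mem_compl_iff, Set.mem_singleton_iff]
        intro h; rw [h] at hy; linarith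
    · exact fun y hy => (hd y hy).differentiableAt.differentiableWithinAt
    · intro y hy
      rw [(hd y hy).deriv]
      have hy1 : (1:ℝ) < y := by rwa [interior_Ici] at hy
      have hy0 : (0:ℝ) < y := by linarith
      have hden : (0:ℝ) < (2*(2*y+1))^2 := by positivity
      rw [sub_nonneg, inv_eq_one_div, div_le_div_iff₀ hy0 hden]
      nlinarith [sq_nonneg (y-1), mul_nonneg (mul_nonneg (sub_nonneg.2 hy1.le) (sub_nonneg.2 hy1.le)) (sub_nonneg.2 hy1.le)]
  have h2 := hmono (Set.self_mem_Ici) (Set.mem_Ici.2 hx) hx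
  simp only [hF, Real.log_one] at h2
  norm_num at h2
  linarith

private lemma fNN {p q : ℝ} (hp : 0 ≤ p) (hq : 0 ≤ q) (hpq : 0 < p → 0 < q) :
    0 ≤ p * Real.log (p/q) + q - p := by
  rcases eq_or_lt_of_le hp with h | h
  · simp [← h]; exact hq
  · have hq0 : 0 < q := hpq h
    have hx : 0 < p / q := div_pos h hq0
    have := Real.one_sub_inv_le_log_of_pos hx
    have hinv : (p/q)⁻¹ = q/p := by rw [inv_div]
    rw [hinv] at this
    have h2 : p * (1 - q/p) ≤ p * Real.log (p/q) :=
      mul_le_mul_of_nonneg_left this hp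
    have h3 : p * (1 - q/p) = p - q := by field_simp
    linarith

private lemma fLB1 {p q : ℝ} (hq : 0 ≤ q) (hqp : q ≤ p) (hpq : 0 < p → 0 < q) :
    (p-q)^2*(2*p+q)/(p^2+4*p*q+q^2) ≤ p * Real.log (p/q) + q - p := by
  rcases eq_or_lt_of_le (hq.trans hqp) with h | hp0
  · have hq0 : q = 0 := le_antisymm (hqp.trans h.symm.le) hq
    simp [← h, hq0]
  · have hq0 : 0 < q := hpq hp0
    have hx : 1 ≤ p / q := (one_le_div hq0).2 hqp
    have hlog := log_pade_lb hx
    have hden : (0:ℝ) < p^2+4*p*q+q^2 := by positivity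
    have hd2 : (0:ℝ) < (p/q)^2+4*(p/q)+1 := by positivity
    have hkey : (p-q)^2*(2*p+q)/(p^2+4*p*q+q^2)
        = p * (3*((p/q)^2-1)/((p/q)^2+4*(p/q)+1)) + q - p := by
      field_simp
      ring
    rw [hkey]
    have := mul_le_mul_of_nonneg_left hlog hp0.le
    linarith

private lemma fLB2 {p q : ℝ} (hp : 0 ≤ p) (hpq : p ≤ q) (hq : 0 < q) :
    3*(q-p)^2/(2*(2*q+p)) ≤ p * Real.log (p/q) + q - p := by
  rcases eq_or_lt_of_le hp with h | hp0
  · rw [← h]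
    simp only [zero_mul, sub_zero, add_zero, zero_add]
    rw [div_le_iff₀ (by positivity)]
    nlinarith [sq_nonneg q]
  · have hx : 1 ≤ q / p := (one_le_div hp0).2 hpq
    have hlog := log_pade_ub hx
    have hlog2 : -(((q/p)-1)*((q/p)+5)/(2*(2*(q/p)+1))) ≤ Real.log (p/q) := by
      have heq : Real.log (p/q) = - Real.log (q/p) := by
        rw [← Real.log_inv, inv_div]
      rw [heq]
      linarith
    have hd2 : (0:ℝ) < 2*(2*(q/p)+1) := by positivity
    have hd3 : (0:ℝ) < (2:ℝ)*(2*q+p) := by positivity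
    have hkey : 3*(q-p)^2/(2*(2*q+p))
        = p * (-(((q/p)-1)*((q/p)+5)/(2*(2*(q/p)+1)))) + q - p := by
      field_simp
      ring
    rw [hkey]
    have := mul_le_mul_of_nonneg_left hlog2 hp0.le
    linarith

private lemma CS2 {a b X Y x y : ℝ} (ha : 0 < a) (hb : 0 < b)
    (h1 : a^2 ≤ X) (h2 : b^2 ≤ Y) (hxy : X*Y = x*y) (hx : 0 ≤ x) (hy : 0 ≤ y) :
    2*(a*b) ≤ x + y := by
  nlinarith [sq_nonneg (x-y), mul_le_mul h1 h2 (sq_nonneg b) (le_trans (sq_nonneg a) h1),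
    mul_pos ha hb]

set_option maxHeartbeats 1000000 in
private lemma step_core (Ac m m' s s' f₁ f₂ d : ℝ) (hA : 0 < Ac)
    (hm : 0 ≤ m) (hm' : 0 ≤ m') (hmsum : m + m' ≤ 1)
    (hs : 0 ≤ s) (hss' : s ≤ s') (hssum : s + s' ≤ 1)
    (hms : 0 < m → 0 < s)
    (hf1 : 0 ≤ f₁) (hf2 : 0 ≤ f₂)
    (hq1 : s < m → (m-s)^2*(2*m+s) ≤ f₁ * (m^2+4*m*s+s^2))
    (hq2 : m' < s' → 3*(s'-m')^2 ≤ f₂ * (2*(2*s'+m')))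
    (hfd : f₁ + f₂ ≤ d) :
    m - m' ≤ Ac * (1 - m) + (Ac/4 + 1/Ac + 1) * d := by
  have hs' : 0 ≤ s' := hs.trans hss'
  have hd0 : 0 ≤ d := by linarith
  have hm1 : m ≤ 1 := by linarith
  have hC : 0 < Ac/4 + 1/Ac + 1 := by positivity
  by_cases ht : m - m' ≤ 0
  · have h1 : 0 ≤ (Ac/4 + 1/Ac + 1) * d := mul_nonneg hC.le hd0
    have h2 : 0 ≤ Ac * (1 - m) := mul_nonneg hA.le (by linarith)
    linarith
  push_neg at ht
  have hW1 : (1:ℝ) ≤ 2 - m - m' := by linarith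
  have hWd : 2*d ≤ 2*d*(2-m-m') := by
    have := mul_nonneg hd0 (by linarith : (0:ℝ) ≤ 1 - m - m')
    nlinarith [this]
  have hcore : (m-m')^2 ≤ 2*d*(2-m-m') := by
    have hs'le1 : s' ≤ 1 := by linarith
    have hm'le1 : m' ≤ 1 := by linarith
    by_cases hsm : m ≤ s
    · have hm's'lt : m' < s' := by linarith
      have hq2' := hq2 hm's'lt
      have h1 : (m-m')^2 ≤ (s'-m')^2 :=
        pow_le_pow_left₀ ht.le (by linarith) 2
      have h2 : f₂ * (2*(2*s'+m')) ≤ 6*f₂ := by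
        have := mul_nonneg hf2 (by linarith : (0:ℝ) ≤ 3 - (2*s'+m'))
        nlinarith [this]
      have h3 : 2*f₂ ≤ 2*d := by linarith
      linarith
    · push_neg at hsm
      have hm0 : 0 < m := lt_of_le_of_lt hs hsm
      have hs0 : 0 < s := hms hm0
      have hP : (0:ℝ) < 2*m+s := by linarith
      have hq1' := hq1 hsm
      have hs12 : s ≤ 1/2 := by linarith
      by_cases hm's : s' ≤ m'
      · have hD1le : m^2+4*m*s+s^2 ≤ 2*(2*m+s) := by
          nlinarith [mul_le_mul_of_nonneg_right hm1 hm, mul_le_mul_of_nonneg_left hs12 hm,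
            mul_le_mul_of_nonneg_left hs12 hs]
        have hAA := mul_le_mul_of_nonneg_left hD1le hf1
        have ha2 : (m-s)^2 ≤ 2*f₁ := by
          have h5' : ((m-s)^2)*(2*m+s) ≤ (2*f₁)*(2*m+s) := by linarith [hq1', hAA]
          exact le_of_mul_le_mul_right h5' hP
        have h1 : (m-m')^2 ≤ (m-s)^2 := pow_le_pow_left₀ ht.le (by linarith) 2
        have h3 : 2*f₁ ≤ 2*d := by linarith
        linarith
      · push_neg at hm's
        have hq2' := hq2 hm's
        have hα0 : (0:ℝ) < m - s := by linarith
        have hβ0 : (0:ℝ) < s' - m' := by linarith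
        have hu1 : (m-s)^2 ≤ f₁ * ((2*m+4*s)/3) := by
          have hD1le2 : 3*(m^2+4*m*s+s^2) ≤ (2*m+s)*(2*m+4*s) := by nlinarith [sq_nonneg m, sq_nonneg s]
          have hA1 := mul_le_mul_of_nonneg_left hD1le2 hf1
          have h5' : ((m-s)^2*3)*(2*m+s) ≤ (f₁*(2*m+4*s))*(2*m+s) := by linarith [hq1', hA1]
          have h6 := le_of_mul_le_mul_right h5' hP
          linarith [h6, (by ring : f₁ * ((2*m+4*s)/3) * 3 = f₁*(2*m+4*s))]
        have hu2 : (s'-m')^2 ≤ f₂ * (2*(2*s'+m')/3) := by linarith [hq2']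
        have hprod : ((m-s)^2)*((s'-m')^2) ≤ (f₁ * ((2*m+4*s)/3))*(f₂ * (2*(2*s'+m')/3)) :=
          mul_le_mul hu1 hu2 (sq_nonneg _) (by positivity)
        have hS0 : (0:ℝ) ≤ f₁*(2*(2*s'+m')/3) + f₂*((2*m+4*s)/3) := by positivity
        have h2ab : 2*((m-s)*(s'-m')) ≤ f₁*(2*(2*s'+m')/3) + f₂*((2*m+4*s)/3) :=
          CS2 hα0 hβ0 hu1 hu2 (by ring)
            (by positivity) (by positivity)
        have hCS : ((m-s)+(s'-m'))^2 ≤ (f₁+f₂)*((2*m+4*s)/3 + 2*(2*s'+m')/3) := by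
          linarith [hu1, hu2, h2ab]
        have hsum : (2*m+4*s)/3 + 2*(2*s'+m')/3 ≤ 2*(2-m-m') := by
          have hs'1s : s' ≤ 1 - s := by linarith
          linarith
        have h1 : (m-m')^2 ≤ ((m-s)+(s'-m'))^2 := pow_le_pow_left₀ ht.le (by linarith) 2
        have h2 : (f₁+f₂)*((2*m+4*s)/3 + 2*(2*s'+m')/3) ≤ d*(2*(2-m-m')) :=
          mul_le_mul hfd hsum (by positivity) hd0
        have h3 : d*(2*(2-m-m')) = 2*d*(2-m-m') := by ring
        linarith
  have hkey : 4*Ac*(m-m') ≤ 4*Ac*(Ac*(1-m)) + (Ac+2)^2*d := by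
    nlinarith [sq_nonneg (4*Ac*(1-m) + (Ac-2)*(m-m')),
      mul_nonneg (sq_nonneg (Ac+2)) (by linarith : (0:ℝ) ≤ 2*d*(2-m-m') - (m-m')^2),
      (by linarith : (0:ℝ) < 4*(1-m) + 2*(m-m'))]
  have h4A : (0:ℝ) < 4*Ac := by linarith
  have hexp2 : 4*Ac*(Ac*(1-m) + (Ac/4+1/Ac+1)*d) = 4*Ac*(Ac*(1-m)) + (Ac+2)^2*d := by
    field_simp
    ring
  apply le_of_mul_le_mul_left _ h4A
  rw [hexp2]
  exact hkey

set_option maxHeartbeats 800000 in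
private lemma step_ineq (Ac : ℝ) (hA : 0 < Ac) (m m' s s' d : ℝ)
    (hm : 0 ≤ m) (hm' : 0 ≤ m') (hmsum : m + m' ≤ 1)
    (hs : 0 ≤ s) (hss' : s ≤ s') (hssum : s + s' ≤ 1)
    (hms : 0 < m → 0 < s) (hm's' : 0 < m' → 0 < s')
    (hd : (m * Real.log (m/s) + s - m) + (m' * Real.log (m'/s') + s' - m') ≤ d) :
    m - m' ≤ Ac * (1 - m) + (Ac/4 + 1/Ac + 1) * d := by
  have hs'0 : 0 ≤ s' := hs.trans hss'
  have hf1 : 0 ≤ m * Real.log (m/s) + s - m := fNN hm hs hms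
  have hf2 : 0 ≤ m' * Real.log (m'/s') + s' - m' := fNN hm' hs'0 hm's'
  apply step_core Ac m m' s s' _ _ d hA hm hm' hmsum hs hss' hssum hms hf1 hf2 _ _ hd
  · intro hsm
    have hq1 : (m-s)^2*(2*m+s)/(m^2+4*m*s+s^2) ≤ m * Real.log (m/s) + s - m :=
      fLB1 hs hsm.le hms
    have hm0 : 0 < m := lt_of_le_of_lt hs hsm
    rw [div_le_iff₀ (by positivity)] at hq1
    linarith
  · intro hm's
    have hs'p : 0 < s' := lt_of_le_of_lt hm' hm's
    have hq2 : 3*(s'-m')^2/(2*(2*s'+m')) ≤ m' * Real.log (m'/s') + s' - m' :=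
      fLB2 hm' hm's.le hs'p
    rw [div_le_iff₀ (by positivity)] at hq2
    linarith
open scoped BigOperators

/-- Total μ-expected number of prediction errors in the first n predictions
of the deterministic predictor p. -/
noncomputable def errE {A : Type} [Fintype A] (μ : List A → ℝ) (p : List A → A) (n : ℕ) : ℝ :=
  ∑ k ∈ Finset.range n, ∑ x : Fin k → A,
    μ (List.ofFn x) * (1 - condP μ (List.ofFn x) (p (List.ofFn x)))

private lemma perterm {A : Type} [Fintype A] (M ξ : List A → ℝ)
    (hMnn : ∀ l, 0 ≤ M l) (hξnn : ∀ l, 0 ≤ ξ l)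
    (hMc : ∀ l, ∑ a : A, M (l ++ [a]) = M l)
    (hξc : ∀ l, ∑ a : A, ξ (l ++ [a]) = ξ l)
    (hdom : ∀ l, 0 < M l → 0 < ξ l)
    (predμ predξ : List A → A)
    (hpredμ : ∀ l a, condP M l a ≤ condP M l (predμ l))
    (hpredξ : ∀ l a, condP ξ l a ≤ condP ξ l (predξ l))
    (Ac Bc : ℝ) (hA : 0 < Ac) (hB : Bc = Ac / 4 + 1 / Ac) (l : List A) :
    M l * (1 - condP M l (predξ l)) ≤
      (Ac + 1) * (M l * (1 - condP M l (predμ l))) +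
      (Bc + 1) * (M l * ∑ a : A, condP M l a * Real.log (condP M l a / condP ξ l a)) := by
  classical
  rcases eq_or_lt_of_le (hMnn l) with hM0 | hM0
  · rw [← hM0]
    simp
  · have hξl : 0 < ξ l := hdom l hM0
    set p : A → ℝ := fun a => condP M l a with hp
    set q : A → ℝ := fun a => condP ξ l a with hq
    have hpnn : ∀ a, 0 ≤ p a := fun a => div_nonneg (hMnn _) (hMnn l)
    have hqnn : ∀ a, 0 ≤ q a := fun a => div_nonneg (hξnn _) (hξnn l)
    have hpsum : ∑ a : A, p a = 1 := by
      simp only [hp, condP, ← Finset.sum_div, hMc l]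
      exact div_self (ne_of_gt hM0)
    have hqsum : ∑ a : A, q a = 1 := by
      simp only [hq, condP, ← Finset.sum_div, hξc l]
      exact div_self (ne_of_gt hξl)
    have hdompq : ∀ a, 0 < p a → 0 < q a := by
      intro a hpa
      have hMla : 0 < M (l ++ [a]) := by
        by_contra hcon
        push_neg at hcon
        have : M (l ++ [a]) = 0 := le_antisymm hcon (hMnn _)
        rw [hp] at hpa
        simp only [condP, this, zero_div] at hpa
        exact lt_irrefl 0 hpa
      have hξla : 0 < ξ (l ++ [a]) := hdom _ hMla
      exact div_pos hξla hξl
    set D := ∑ a : A, p a * Real.log (p a / q a) with hD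
    have hDsum : ∑ a : A, (p a * Real.log (p a / q a) + q a - p a) = D := by
      rw [hD]
      rw [Finset.sum_sub_distrib, Finset.sum_add_distrib, hpsum, hqsum]
      ring
    have hfnn : ∀ a, 0 ≤ p a * Real.log (p a / q a) + q a - p a :=
      fun a => fNN (hpnn a) (hqnn a) (hdompq a)
    have hDnn : 0 ≤ D := hDsum ▸ Finset.sum_nonneg (fun a _ => hfnn a)
    have hple : ∀ a, p a ≤ 1 := by
      intro a
      have h1 := Finset.single_le_sum (fun b _ => hpnn b) (Finset.mem_univ a)
      rw [hpsum] at h1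
      exact h1
    have hBc1 : 0 < Bc + 1 := by rw [hB]; positivity
    have hscalar : (1 - p (predξ l)) ≤ (Ac+1) * (1 - p (predμ l)) + (Bc+1) * D := by
      set y := predμ l with hy
      set z := predξ l with hz
      by_cases hyz : y = z
      · rw [hyz]
        have h1 : 0 ≤ Ac * (1 - p z) := mul_nonneg hA.le (by linarith [hple z])
        have h2 : 0 ≤ (Bc+1) * D := mul_nonneg hBc1.le hDnn
        linarith
      · have hsubset : ∀ g : A → ℝ, (∀ a, 0 ≤ g a) → g y + g z ≤ ∑ a : A, g a := by
          intro g hg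
          have h1 := Finset.sum_le_sum_of_subset_of_nonneg (Finset.subset_univ {y, z})
            (fun a _ _ => hg a)
          rwa [Finset.sum_pair hyz] at h1
        have hmm' : p y + p z ≤ 1 := by
          have := hsubset p hpnn
          rwa [hpsum] at this
        have hss : q y + q z ≤ 1 := by
          have := hsubset q hqnn
          rwa [hqsum] at this
        have hpair : (p y * Real.log (p y / q y) + q y - p y)
            + (p z * Real.log (p z / q z) + q z - p z) ≤ D := by
          have h1 := hsubset (fun a => p a * Real.log (p a / q a) + q a - p a) hfnn
          rwa [hDsum] at h1
        have hstep := step_ineq Ac hA (p y) (p z) (q y) (q z) D (hpnn y) (hpnn z) hmm'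
          (hqnn y) (hpredξ l y) hss (hdompq y) (hdompq z) hpair
        rw [hB]
        linarith
    have hmul := mul_le_mul_of_nonneg_left hscalar (hMnn l)
    calc M l * (1 - p (predξ l)) ≤ M l * ((Ac+1) * (1 - p (predμ l)) + (Bc+1) * D) := hmul
    _ = (Ac+1) * (M l * (1 - p (predμ l))) + (Bc+1) * (M l * D) := by ring

/-- Linear error bound: for A > 0 and B = A/4 + 1/A, the expected errors of the
universal predictor Θ_ξ satisfy E_{nΘ_ξ} ≤ (A+1) E_{nΘ_μ} + (B+1) H_n. -/
theorem linear_error_bound {A : Type} [Fintype A]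
    (μs : ℕ → List A → ℝ) (w : ℕ → ℝ)
    (hwpos : ∀ i, 0 < w i) (hwsum : HasSum w 1)
    (hnn : ∀ i l, 0 ≤ μs i l)
    (hroot : ∀ i, μs i [] = 1)
    (hcompat : ∀ i l, ∑ a : A, μs i (l ++ [a]) = μs i l)
    (ξ : List A → ℝ) (hξ : ∀ l, ξ l = ∑' i, w i * μs i l)
    (i0 : ℕ)
    (predμ predξ : List A → A)
    (hpredμ : ∀ l a, condP (μs i0) l a ≤ condP (μs i0) l (predμ l))
    (hpredξ : ∀ l a, condP ξ l a ≤ condP ξ l (predξ l))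
    (Ac Bc : ℝ) (hA : 0 < Ac) (hB : Bc = Ac / 4 + 1 / Ac) :
    ∀ n : ℕ, errE (μs i0) predξ n ≤
      (Ac + 1) * errE (μs i0) predμ n + (Bc + 1) * relEnt (μs i0) ξ n := by
  have hμle1 : ∀ i l, μs i l ≤ 1 := by
    intro i l
    induction l using List.reverseRecOn with
    | nil => exact (hroot i).le
    | append_singleton l a ih =>
      have h1 : μs i (l ++ [a]) ≤ ∑ b : A, μs i (l ++ [b]) :=
        Finset.single_le_sum (fun b _ => hnn i (l ++ [b])) (Finset.mem_univ a)
      rw [hcompat] at h1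
      exact h1.trans ih
  have hsummable : ∀ l, Summable (fun i => w i * μs i l) := by
    intro l
    exact Summable.of_nonneg_of_le (fun i => mul_nonneg (hwpos i).le (hnn i l))
      (fun i => mul_le_of_le_one_right (hwpos i).le (hμle1 i l)) hwsum.summable
  have hξnn : ∀ l, 0 ≤ ξ l := by
    intro l
    rw [hξ]
    exact tsum_nonneg (fun i => mul_nonneg (hwpos i).le (hnn i l))
  have hdom : ∀ l, 0 < μs i0 l → 0 < ξ l := by
    intro l hl
    rw [hξ]
    have h1 : w i0 * μs i0 l ≤ ∑' i, w i * μs i l :=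
      Summable.le_tsum (hsummable l) i0 (fun j _ => mul_nonneg (hwpos j).le (hnn j l))
    have h2 : 0 < w i0 * μs i0 l := mul_pos (hwpos i0) hl
    linarith
  have hξc : ∀ l, ∑ a : A, ξ (l ++ [a]) = ξ l := by
    intro l
    rw [hξ l]
    have h1 : ∀ a : A, ξ (l ++ [a]) = ∑' i, w i * μs i (l ++ [a]) := fun a => hξ _
    simp_rw [h1]
    rw [← Summable.tsum_finsetSum (fun a _ => hsummable (l ++ [a]))]
    apply tsum_congr
    intro i
    rw [← Finset.mul_sum, hcompat]
  intro n
  unfold errE relEnt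
  rw [Finset.mul_sum, Finset.mul_sum, ← Finset.sum_add_distrib]
  apply Finset.sum_le_sum
  intro k _
  rw [Finset.mul_sum, Finset.mul_sum, ← Finset.sum_add_distrib]
  apply Finset.sum_le_sum
  intro x _
  exact perterm (μs i0) ξ (hnn i0) hξnn (hcompat i0) hξc hdom predμ predξ hpredμ hpredξ
    Ac Bc hA hB (List.ofFn x)
end

section
/- (Error bound theorem) The total expected error counts of the universal predictor Θ_ξ and the informed predictor Θ_μ satisfy 0 ≤ E_{nΘ_ξ} − E_{nΘ_μ} ≤ H_n + √(4·E_{nΘ_μ}·H_n + H_n²) ≤ 2H_n + 2√(E_{nΘ_μ}·H_n), where H_n ≤ ln(1/w_μ). -/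
open scoped BigOperators

open Real

section Aux


section Aux


noncomputable def phiKL (p q : ℝ) : ℝ := p * Real.log (p / q) - p + q

lemma phiKL_nonneg {p q : ℝ} (hp : 0 ≤ p) (hq : 0 ≤ q) (h : p ≠ 0 → 0 < q) :
    0 ≤ phiKL p q := by
  rcases eq_or_lt_of_le hp with h0 | hp'
  · simpa [phiKL, ← h0] using hq
  · have hq' : 0 < q := h hp'.ne'
    have hlog : 1 - (p / q)⁻¹ ≤ Real.log (p / q) :=
      Real.one_sub_inv_le_log_of_pos (div_pos hp' hq')
    have hinv : (p / q)⁻¹ = q / p := by rw [inv_div]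
    rw [hinv] at hlog
    have h2 : p * (1 - q / p) ≤ p * Real.log (p / q) :=
      mul_le_mul_of_nonneg_left hlog hp
    have h3 : p * (1 - q / p) = p - q := by field_simp
    unfold phiKL; linarith [h3 ▸ h2]

lemma phiKL_add_le {p1 q1 p2 q2 : ℝ} (hp1 : 0 ≤ p1) (hp2 : 0 ≤ p2)
    (hq1 : 0 ≤ q1) (hq2 : 0 ≤ q2) (h1 : p1 ≠ 0 → 0 < q1) (h2 : p2 ≠ 0 → 0 < q2) :
    phiKL (p1 + p2) (q1 + q2) ≤ phiKL p1 q1 + phiKL p2 q2 := by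
  unfold phiKL
  have main : (p1 + p2) * Real.log ((p1 + p2) / (q1 + q2)) ≤
      p1 * Real.log (p1 / q1) + p2 * Real.log (p2 / q2) := by
    rcases eq_or_lt_of_le hp1 with e1 | hp1'
    · rcases eq_or_lt_of_le hp2 with e2 | hp2'
      · simp [← e1, ← e2]
      · have hq2' := h2 hp2'.ne'
        have hu : 0 < q1 + q2 := by linarith
        have : Real.log (p2 / (q1 + q2)) ≤ Real.log (p2 / q2) :=
          Real.log_le_log (by positivity) (by
            apply div_le_div_of_nonneg_left hp2 hq2' <;> linarith)
        simp only [← e1, zero_add]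
        nlinarith [this, hp2'.le]
    · rcases eq_or_lt_of_le hp2 with e2 | hp2'
      · have hq1' := h1 hp1'.ne'
        have hu : 0 < q1 + q2 := by linarith
        have : Real.log (p1 / (q1 + q2)) ≤ Real.log (p1 / q1) :=
          Real.log_le_log (by positivity) (by
            apply div_le_div_of_nonneg_left hp1 hq1' <;> linarith)
        simp only [← e2, add_zero]
        nlinarith [this, hp1'.le]
      · have hq1' := h1 hp1'.ne'
        have hq2' := h2 hp2'.ne'
        have ht : 0 < p1 + p2 := by linarith
        have hu : 0 < q1 + q2 := by linarith
        have key1 : 1 - (p1 * (q1 + q2) / (q1 * (p1 + p2)))⁻¹ ≤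
            Real.log (p1 * (q1 + q2) / (q1 * (p1 + p2))) :=
          Real.one_sub_inv_le_log_of_pos (by positivity)
        have key2 : 1 - (p2 * (q1 + q2) / (q2 * (p1 + p2)))⁻¹ ≤
            Real.log (p2 * (q1 + q2) / (q2 * (p1 + p2))) :=
          Real.one_sub_inv_le_log_of_pos (by positivity)
        have l1 : Real.log (p1 * (q1 + q2) / (q1 * (p1 + p2))) =
            Real.log (p1 / q1) - Real.log ((p1 + p2) / (q1 + q2)) := by
          rw [Real.log_div (by positivity) (by positivity),
            Real.log_div (by positivity) (by positivity),
            Real.log_div (by positivity) (by positivity),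
            Real.log_mul (by positivity) (by positivity),
            Real.log_mul (by positivity) (by positivity)]
          ring
        have l2 : Real.log (p2 * (q1 + q2) / (q2 * (p1 + p2))) =
            Real.log (p2 / q2) - Real.log ((p1 + p2) / (q1 + q2)) := by
          rw [Real.log_div (by positivity) (by positivity),
            Real.log_div (by positivity) (by positivity),
            Real.log_div (by positivity) (by positivity),
            Real.log_mul (by positivity) (by positivity),
            Real.log_mul (by positivity) (by positivity)]
          ring
        rw [l1] at key1
        rw [l2] at key2
        have i1 : (p1 * (q1 + q2) / (q1 * (p1 + p2)))⁻¹ =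
            q1 * (p1 + p2) / (p1 * (q1 + q2)) := by rw [inv_div]
        have i2 : (p2 * (q1 + q2) / (q2 * (p1 + p2)))⁻¹ =
            q2 * (p1 + p2) / (p2 * (q1 + q2)) := by rw [inv_div]
        rw [i1] at key1
        rw [i2] at key2
        have m1 := mul_le_mul_of_nonneg_left key1 hp1
        have m2 := mul_le_mul_of_nonneg_left key2 hp2
        have c1 : p1 * (1 - q1 * (p1 + p2) / (p1 * (q1 + q2))) =
            p1 - q1 * (p1 + p2) / (q1 + q2) := by field_simp
        have c2 : p2 * (1 - q2 * (p1 + p2) / (p2 * (q1 + q2))) =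
            p2 - q2 * (p1 + p2) / (q1 + q2) := by field_simp
        rw [c1] at m1
        rw [c2] at m2
        have csum : q1 * (p1 + p2) / (q1 + q2) + q2 * (p1 + p2) / (q1 + q2) = p1 + p2 := by
          field_simp
        nlinarith [m1, m2]
  linarith

section Pinsker
open Set

noncomputable def Gfun (x : ℝ) : ℝ := Real.log x - Real.log (1 - x) - 4 * x

lemma Gfun_mono : MonotoneOn Gfun (Ioo (0:ℝ) 1) := by
  have hcont : ContinuousOn Gfun (Ioo (0:ℝ) 1) := by
    intro x hx
    have h1 : x ≠ 0 := ne_of_gt hx.1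
    have h2 : (1:ℝ) - x ≠ 0 := sub_ne_zero.mpr (ne_of_gt hx.2)
    exact (((Real.continuousAt_log h1).sub
      ((Real.continuousAt_log h2).comp ((continuous_const.sub continuous_id).continuousAt))).sub
      ((continuous_const.mul continuous_id).continuousAt)).continuousWithinAt
  have hderiv : ∀ x ∈ Ioo (0:ℝ) 1, HasDerivAt Gfun (x⁻¹ + (1 - x)⁻¹ - 4) x := by
    intro x hx
    have h1 : x ≠ 0 := ne_of_gt hx.1
    have h2 : (1:ℝ) - x ≠ 0 := sub_ne_zero.mpr (ne_of_gt hx.2)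
    have d1 : HasDerivAt Real.log x⁻¹ x := Real.hasDerivAt_log h1
    have dsub : HasDerivAt (fun y : ℝ => 1 - y) (-1) x := by
      simpa using (hasDerivAt_id x).const_sub 1
    have d2 : HasDerivAt (fun y : ℝ => Real.log (1 - y)) ((1 - x)⁻¹ * (-1)) x :=
      (Real.hasDerivAt_log h2).comp x dsub
    have d3 : HasDerivAt (fun y : ℝ => 4 * y) 4 x := by
      simpa using (hasDerivAt_id x).const_mul 4
    have := (d1.sub d2).sub d3
    exact this.congr_deriv (by ring)
  apply monotoneOn_of_deriv_nonneg (convex_Ioo 0 1) hcont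
  · intro x hx
    rw [interior_Ioo] at hx
    exact (hderiv x hx).differentiableAt.differentiableWithinAt
  · intro x hx
    rw [interior_Ioo] at hx
    rw [(hderiv x hx).deriv]
    have hx1 : 0 < x := hx.1
    have hx2 : 0 < 1 - x := by linarith [hx.2]
    have hmul : 0 < x * (1 - x) := mul_pos hx1 hx2
    have e : x⁻¹ + (1 - x)⁻¹ = 1 / (x * (1 - x)) := by
      field_simp
      ring
    rw [e]
    rw [sub_nonneg, le_div_iff₀ hmul]
    nlinarith [sq_nonneg (2 * x - 1)]

noncomputable def gfun (q x : ℝ) : ℝ :=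
  x * Real.log x - x * Real.log q + (1 - x) * Real.log (1 - x)
    - (1 - x) * Real.log (1 - q) - 2 * (x - q) ^ 2

lemma gfun_cont (q : ℝ) : Continuous (gfun q) := by
  unfold gfun
  have h1 : Continuous fun x : ℝ => x * Real.log x := Real.continuous_mul_log
  have h2 : Continuous fun x : ℝ => (1 - x) * Real.log (1 - x) :=
    Real.continuous_mul_log.comp (continuous_const.sub continuous_id)
  continuity

lemma gfun_deriv {q x : ℝ} (hx : x ∈ Ioo (0:ℝ) 1) :
    HasDerivAt (gfun q) (Gfun x - Gfun q) x := by
  have h1 : x ≠ 0 := ne_of_gt hx.1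
  have h2 : (1:ℝ) - x ≠ 0 := sub_ne_zero.mpr (ne_of_gt hx.2)
  have d1 : HasDerivAt (fun y : ℝ => y * Real.log y) (Real.log x + 1) x :=
    Real.hasDerivAt_mul_log h1
  have dsub : HasDerivAt (fun y : ℝ => 1 - y) (-1) x := by
    simpa using (hasDerivAt_id x).const_sub 1
  have d2 : HasDerivAt (fun y : ℝ => (1 - y) * Real.log (1 - y))
      ((Real.log (1 - x) + 1) * (-1)) x :=
    (Real.hasDerivAt_mul_log h2).comp x dsub
  have d3 : HasDerivAt (fun y : ℝ => y * Real.log q) (Real.log q) x := by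
    simpa using (hasDerivAt_id x).mul_const (Real.log q)
  have d4 : HasDerivAt (fun y : ℝ => (1 - y) * Real.log (1 - q)) (-Real.log (1 - q)) x := by
    have := dsub.mul_const (Real.log (1 - q))
    simpa using this
  have d5 : HasDerivAt (fun y : ℝ => 2 * (y - q) ^ 2) (2 * (2 * (x - q))) x := by
    have h := ((hasDerivAt_id x).sub_const q).pow 2
    have := h.const_mul 2
    simpa using this
  have := ((((d1.sub d3).add d2).sub d4).sub d5)
  exact this.congr_deriv (by unfold Gfun; ring)

lemma pinsker_bin {p q : ℝ} (hp0 : 0 ≤ p) (hp1 : p ≤ 1) (hq0 : 0 < q) (hq1 : q < 1) :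
    2 * (p - q) ^ 2 ≤ phiKL p q + phiKL (1 - p) (1 - q) := by
  have hqmem : q ∈ Ioo (0:ℝ) 1 := ⟨hq0, hq1⟩
  have gq : gfun q q = 0 := by unfold gfun; ring
  have hg : 0 ≤ gfun q p := by
    rcases le_total p q with hle | hle
    · have hanti : AntitoneOn (gfun q) (Icc 0 q) := by
        apply antitoneOn_of_deriv_nonpos (convex_Icc 0 q) (gfun_cont q).continuousOn
        · intro x hx
          rw [interior_Icc] at hx
          have hx' : x ∈ Ioo (0:ℝ) 1 := ⟨hx.1, lt_trans hx.2 hq1⟩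
          exact (gfun_deriv hx').differentiableAt.differentiableWithinAt
        · intro x hx
          rw [interior_Icc] at hx
          have hx' : x ∈ Ioo (0:ℝ) 1 := ⟨hx.1, lt_trans hx.2 hq1⟩
          rw [(gfun_deriv hx').deriv]
          have := Gfun_mono hx' hqmem (le_of_lt hx.2)
          linarith
      have := hanti ⟨hp0, hle⟩ ⟨le_of_lt hq0, le_refl q⟩ hle
      linarith [gq ▸ this]
    · have hmono : MonotoneOn (gfun q) (Icc q 1) := by
        apply monotoneOn_of_deriv_nonneg (convex_Icc q 1) (gfun_cont q).continuousOn
        · intro x hx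
          rw [interior_Icc] at hx
          have hx' : x ∈ Ioo (0:ℝ) 1 := ⟨lt_trans hq0 hx.1, hx.2⟩
          exact (gfun_deriv hx').differentiableAt.differentiableWithinAt
        · intro x hx
          rw [interior_Icc] at hx
          have hx' : x ∈ Ioo (0:ℝ) 1 := ⟨lt_trans hq0 hx.1, hx.2⟩
          rw [(gfun_deriv hx').deriv]
          have := Gfun_mono hqmem hx' (le_of_lt hx.1)
          linarith
      have := hmono ⟨le_refl q, le_of_lt hq1⟩ ⟨hle, hp1⟩ hle
      linarith [gq ▸ this]
  have ep : p * Real.log (p / q) = p * Real.log p - p * Real.log q := by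
    rcases eq_or_lt_of_le hp0 with h0 | hp'
    · simp [← h0]
    · rw [Real.log_div hp'.ne' hq0.ne']; ring
  have e1p : (1 - p) * Real.log ((1 - p) / (1 - q)) =
      (1 - p) * Real.log (1 - p) - (1 - p) * Real.log (1 - q) := by
    rcases eq_or_lt_of_le hp1 with h1 | hp'
    · simp [h1]
    · have h1p : (1:ℝ) - p > 0 := by linarith
      have h1q : (1:ℝ) - q > 0 := by linarith
      rw [Real.log_div h1p.ne' h1q.ne']; ring
  unfold phiKL
  unfold gfun at hg
  rw [ep, e1p]
  linarith

end Pinsker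

lemma sum_phiKL_ge {α : Type*} (F : Finset α) (p q : α → ℝ)
    (hp : ∀ a ∈ F, 0 ≤ p a) (hq : ∀ a ∈ F, 0 ≤ q a) (h : ∀ a ∈ F, p a ≠ 0 → 0 < q a) :
    phiKL (∑ a ∈ F, p a) (∑ a ∈ F, q a) ≤ ∑ a ∈ F, phiKL (p a) (q a) := by
  induction F using Finset.cons_induction_on with
  | empty => simp [phiKL]
  | cons _ _ hnot ih =>
    rename_i a F'
    simp only [Finset.sum_cons]
    have hp' : ∀ b ∈ F', 0 ≤ p b := fun b hb => hp b (Finset.mem_cons_of_mem hb)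
    have hq' : ∀ b ∈ F', 0 ≤ q b := fun b hb => hq b (Finset.mem_cons_of_mem hb)
    have h' : ∀ b ∈ F', p b ≠ 0 → 0 < q b := fun b hb => h b (Finset.mem_cons_of_mem hb)
    have hma : a ∈ Finset.cons a F' hnot := Finset.mem_cons_self a F'
    have step := phiKL_add_le (hp a hma) (Finset.sum_nonneg hp') (hq a hma)
      (Finset.sum_nonneg hq') (h a hma)
      (by
        intro hne
        obtain ⟨b, hb, hpb⟩ := Finset.exists_ne_zero_of_sum_ne_zero hne
        exact lt_of_lt_of_le (h' b hb hpb) (Finset.single_le_sum hq' hb))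
    exact le_trans step (add_le_add_right (ih hp' hq' h') _)

lemma key_ineq {A : Type} [Fintype A] (m s : A → ℝ)
    (hm : ∀ a, 0 ≤ m a) (hs : ∀ a, 0 ≤ s a)
    (hm1 : ∑ a, m a = 1) (hs1 : ∑ a, s a = 1)
    (hms : ∀ a, m a ≠ 0 → 0 < s a) (y z : A)
    (hy : ∀ a, s a ≤ s y) (hz : ∀ a, m a ≤ m z) :
    (m z - m y) ^ 2 ≤ 2 * ((1 - m y) + (1 - m z)) * (∑ a, m a * Real.log (m a / s a)) := by
  classical
  set d := ∑ a, m a * Real.log (m a / s a) with hd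
  have hd_eq : d = ∑ a, phiKL (m a) (s a) := by
    unfold phiKL
    rw [Finset.sum_add_distrib, Finset.sum_sub_distrib, hm1, hs1, hd]
    ring
  have hd0 : 0 ≤ d := by
    rw [hd_eq]
    exact Finset.sum_nonneg fun a _ => phiKL_nonneg (hm a) (hs a) (hms a)
  have hmz1 : m z ≤ 1 := by
    rw [← hm1]; exact Finset.single_le_sum (fun a _ => hm a) (Finset.mem_univ z)
  have hmy0 : 0 ≤ m y := hm y
  have he0 : 0 ≤ m z - m y := by linarith [hz y]
  by_cases hyz : y = z
  · subst hyz
    simp only [sub_self]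
    nlinarith [hd0, hmz1, hm y]
  · have hsum2 : m y + m z ≤ 1 := by
      rw [← hm1]
      have h1 : ({y, z} : Finset A) ⊆ Finset.univ := Finset.subset_univ _
      have h2 : ∑ a ∈ ({y, z} : Finset A), m a = m y + m z := Finset.sum_pair hyz
      rw [← h2]
      exact Finset.sum_le_sum_of_subset_of_nonneg h1 fun a _ _ => hm a
    set T := Finset.univ.filter (fun a => s a < m a) with hT
    have hsplitm := Finset.sum_filter_add_sum_filter_not Finset.univ
      (fun a => s a < m a) m
    have hsplits := Finset.sum_filter_add_sum_filter_not Finset.univ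
      (fun a => s a < m a) s
    have hsplitφ := Finset.sum_filter_add_sum_filter_not Finset.univ
      (fun a => s a < m a) (fun a => phiKL (m a) (s a))
    set Tc := Finset.univ.filter (fun a => ¬ s a < m a) with hTc
    set P := ∑ a ∈ T, m a with hP
    set Q := ∑ a ∈ T, s a with hQ
    rw [hm1] at hsplitm
    rw [hs1] at hsplits
    set δ := P - Q with hδ
    have hδ0 : 0 ≤ δ := by
      rw [hδ, hP, hQ, ← Finset.sum_sub_distrib]
      exact Finset.sum_nonneg fun a ha => by
        have : s a < m a := (Finset.mem_filter.mp ha).2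
        linarith
    have h1 : m z - s z ≤ δ := by
      by_cases hzT : z ∈ T
      · have : m z - s z ≤ ∑ a ∈ T, (m a - s a) :=
          Finset.single_le_sum (f := fun a => m a - s a)
            (fun a ha => by
              have : s a < m a := (Finset.mem_filter.mp ha).2
              linarith) hzT
        rw [hδ, hP, hQ, ← Finset.sum_sub_distrib]
        exact this
      · have : ¬ s z < m z := fun hc => hzT (Finset.mem_filter.mpr ⟨Finset.mem_univ z, hc⟩)
        push_neg at this
        linarith
    have h2 : s y - m y ≤ δ := by
      have hδc : δ = ∑ a ∈ Tc, (s a - m a) := by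
        rw [hδ, hP, hQ]
        have : ∑ a ∈ Tc, (s a - m a) = (∑ a ∈ Tc, s a) - ∑ a ∈ Tc, m a :=
          Finset.sum_sub_distrib _ _
        rw [this]
        have e1 : ∑ a ∈ Tc, s a = 1 - Q := by rw [hQ]; linarith [hsplits]
        have e2 : ∑ a ∈ Tc, m a = 1 - P := by rw [hP]; linarith [hsplitm]
        rw [e1, e2]; ring
      by_cases hyT : y ∈ Tc
      · rw [hδc]
        exact Finset.single_le_sum (f := fun a => s a - m a)
          (fun a ha => by
            have : ¬ s a < m a := (Finset.mem_filter.mp ha).2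
            push_neg at this
            linarith) hyT
      · have : s y < m y := by
          by_contra hc
          exact hyT (Finset.mem_filter.mpr ⟨Finset.mem_univ y, hc⟩)
        linarith
    by_cases hTe : T = ∅
    · have : δ = 0 := by rw [hδ, hP, hQ, hTe]; simp
      have he2 : m z - m y ≤ 2 * δ := by linarith [hz y, hy z, h1, h2, hy y]
      nlinarith [hd0, hsum2]
    · obtain ⟨b, hb⟩ := Finset.nonempty_of_ne_empty hTe
      have hbsm : s b < m b := (Finset.mem_filter.mp hb).2
      have hsb : 0 < s b := hms b (by intro hc; rw [hc] at hbsm; linarith [hs b])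
      have hQpos : 0 < Q := lt_of_lt_of_le hsb
        (Finset.single_le_sum (fun a _ => hs a) hb)
      have hP1 : P ≤ 1 := by
        rw [← hm1, hP]
        exact Finset.sum_le_sum_of_subset_of_nonneg (Finset.subset_univ T) fun a _ _ => hm a
      have hQP : Q < P := Finset.sum_lt_sum_of_nonempty ⟨b, hb⟩
        fun a ha => (Finset.mem_filter.mp ha).2
      have hQ1 : Q < 1 := lt_of_lt_of_le hQP hP1
      have hP0 : 0 ≤ P := Finset.sum_nonneg fun a _ => hm a
      have hpin := pinsker_bin hP0 hP1 hQpos hQ1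
      have hgr1 : phiKL P Q ≤ ∑ a ∈ T, phiKL (m a) (s a) :=
        sum_phiKL_ge T m s (fun a _ => hm a) (fun a _ => hs a) (fun a _ => hms a)
      have hgr2 : phiKL (1 - P) (1 - Q) ≤ ∑ a ∈ Tc, phiKL (m a) (s a) := by
        have e1 : ∑ a ∈ Tc, m a = 1 - P := by rw [hP]; linarith [hsplitm]
        have e2 : ∑ a ∈ Tc, s a = 1 - Q := by rw [hQ]; linarith [hsplits]
        rw [← e1, ← e2]
        exact sum_phiKL_ge Tc m s (fun a _ => hm a) (fun a _ => hs a) (fun a _ => hms a)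
      have hdge : 2 * δ ^ 2 ≤ d := by
        rw [hd_eq]
        have : ∑ a ∈ T, phiKL (m a) (s a) + ∑ a ∈ Tc, phiKL (m a) (s a)
            = ∑ a, phiKL (m a) (s a) := hsplitφ
        rw [hδ]
        nlinarith [hpin, hgr1, hgr2]
      have he2 : m z - m y ≤ 2 * δ := by linarith [hy z, h1, h2]
      nlinarith [hdge, hδ0, hsum2, hd0, he0, he2]

end Aux

lemma sum_ofFn_succ {A : Type} [Fintype A] (f : List A → ℝ) (k : ℕ) :
    ∑ x : Fin (k+1) → A, f (List.ofFn x) =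
      ∑ x : Fin k → A, ∑ a : A, f (List.ofFn x ++ [a]) := by
  classical
  have hofn : ∀ (x : Fin k → A) (a : A),
      List.ofFn (Fin.snoc x a : Fin (k+1) → A) = List.ofFn x ++ [a] := by
    intro x a
    rw [List.ofFn_succ']
    simp [Fin.snoc_castSucc, Fin.snoc_last, List.concat_eq_append]
  calc ∑ x : Fin (k+1) → A, f (List.ofFn x)
      = ∑ p : A × (Fin k → A), f (List.ofFn (Fin.snocEquiv (fun _ => A) p)) :=
        (Equiv.sum_comp (Fin.snocEquiv (fun _ => A)) (fun x => f (List.ofFn x))).symm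
    _ = ∑ a : A, ∑ x : Fin k → A, f (List.ofFn x ++ [a]) := by
        rw [Fintype.sum_prod_type]
        refine Finset.sum_congr rfl fun a _ => Finset.sum_congr rfl fun x _ => ?_
        congr 1
        rw [show ((Fin.snocEquiv (fun _ => A)) (a, x) : Fin (k+1) → A) = Fin.snoc x a from rfl]
        exact hofn x a
    _ = ∑ x : Fin k → A, ∑ a : A, f (List.ofFn x ++ [a]) := Finset.sum_comm

lemma mass_le_one {A : Type} [Fintype A] (μ : List A → ℝ)
    (hnn : ∀ l, 0 ≤ μ l) (hroot : μ [] = 1)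
    (hcomp : ∀ l, ∑ a : A, μ (l ++ [a]) = μ l) : ∀ l, μ l ≤ 1 := by
  intro l
  induction l using List.reverseRecOn with
  | nil => exact le_of_eq hroot
  | append_singleton l a ih =>
    refine le_trans ?_ ih
    rw [← hcomp l]
    exact Finset.single_le_sum (f := fun b => μ (l ++ [b])) (fun b _ => hnn _) (Finset.mem_univ a)

end Aux

/-- Error bound theorem: 0 ≤ E_{nΘ_ξ} − E_{nΘ_μ} ≤ H_n + √(4 E_{nΘ_μ} H_n + H_n²)
≤ 2H_n + 2√(E_{nΘ_μ} H_n), with H_n ≤ ln(1/w_μ). -/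
theorem error_bound {A : Type} [Fintype A]
    (μs : ℕ → List A → ℝ) (w : ℕ → ℝ)
    (hwpos : ∀ i, 0 < w i) (hwsum : HasSum w 1)
    (hnn : ∀ i l, 0 ≤ μs i l)
    (hroot : ∀ i, μs i [] = 1)
    (hcompat : ∀ i l, ∑ a : A, μs i (l ++ [a]) = μs i l)
    (ξ : List A → ℝ) (hξ : ∀ l, ξ l = ∑' i, w i * μs i l)
    (i0 : ℕ)
    (predμ predξ : List A → A)
    (hpredμ : ∀ l a, condP (μs i0) l a ≤ condP (μs i0) l (predμ l))
    (hpredξ : ∀ l a, condP ξ l a ≤ condP ξ l (predξ l)) :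
    ∀ n : ℕ,
      0 ≤ errE (μs i0) predξ n - errE (μs i0) predμ n ∧
      errE (μs i0) predξ n - errE (μs i0) predμ n ≤
        relEnt (μs i0) ξ n +
          Real.sqrt (4 * errE (μs i0) predμ n * relEnt (μs i0) ξ n + (relEnt (μs i0) ξ n) ^ 2) ∧
      relEnt (μs i0) ξ n +
          Real.sqrt (4 * errE (μs i0) predμ n * relEnt (μs i0) ξ n + (relEnt (μs i0) ξ n) ^ 2) ≤
        2 * relEnt (μs i0) ξ n +
          2 * Real.sqrt (errE (μs i0) predμ n * relEnt (μs i0) ξ n) ∧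
      relEnt (μs i0) ξ n ≤ Real.log (1 / w i0) := by
  intro n
  classical
  set μ : List A → ℝ := μs i0 with hμdef
  have hμnn : ∀ l, 0 ≤ μ l := hnn i0
  have hμroot : μ [] = 1 := hroot i0
  have hμcomp : ∀ l, ∑ a : A, μ (l ++ [a]) = μ l := hcompat i0
  have hμmono : ∀ l a, μ (l ++ [a]) ≤ μ l := by
    intro l a
    rw [← hμcomp l]
    exact Finset.single_le_sum (f := fun b => μ (l ++ [b])) (fun b _ => hμnn _) (Finset.mem_univ a)
  have hsummable : ∀ l, Summable fun i => w i * μs i l := by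
    intro l
    refine Summable.of_nonneg_of_le (fun i => mul_nonneg (hwpos i).le (hnn i l))
      (fun i => ?_) hwsum.summable
    have h1 : μs i l ≤ 1 := mass_le_one (μs i) (hnn i) (hroot i) (hcompat i) l
    nlinarith [hwpos i, hnn i l]
  have hξnn : ∀ l, 0 ≤ ξ l := by
    intro l
    rw [hξ]
    exact tsum_nonneg fun i => mul_nonneg (hwpos i).le (hnn i l)
  have hξdom : ∀ l, w i0 * μ l ≤ ξ l := by
    intro l
    rw [hξ]
    exact Summable.le_tsum (hsummable l) i0 fun j _ => mul_nonneg (hwpos j).le (hnn j l)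
  have hξpos : ∀ l, 0 < μ l → 0 < ξ l :=
    fun l h => lt_of_lt_of_le (mul_pos (hwpos i0) h) (hξdom l)
  have hξroot : ξ [] = 1 := by
    rw [hξ]
    have e : (fun i => w i * μs i []) = w := funext fun i => by rw [hroot i, mul_one]
    rw [e, hwsum.tsum_eq]
  have hξcomp : ∀ l, ∑ a : A, ξ (l ++ [a]) = ξ l := by
    intro l
    have e1 : ∑ a : A, ξ (l ++ [a]) = ∑ a : A, ∑' i, w i * μs i (l ++ [a]) := by
      refine Finset.sum_congr rfl fun a _ => hξ (l ++ [a])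
    rw [e1, ← Summable.tsum_finsetSum (fun a _ => hsummable (l ++ [a]))]
    rw [hξ]
    refine tsum_congr fun i => ?_
    rw [← Finset.mul_sum, hcompat i l]
  -- conditional probability facts
  have hcond_le_one : ∀ l a, 0 < μ l → condP μ l a ≤ 1 := by
    intro l a h
    rw [condP, div_le_one h]
    exact hμmono l a
  have hcond_nn : ∀ l a, 0 ≤ condP μ l a := by
    intro l a
    exact div_nonneg (hμnn _) (hμnn _)
  have hconds_nn : ∀ l a, 0 ≤ condP ξ l a :=
    fun l a => div_nonneg (hξnn _) (hξnn _)
  have hcond_sum : ∀ l, 0 < μ l → ∑ a : A, condP μ l a = 1 := by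
    intro l h
    simp only [condP]
    rw [← Finset.sum_div, hμcomp, div_self (ne_of_gt h)]
  have hconds_sum : ∀ l, 0 < μ l → ∑ a : A, condP ξ l a = 1 := by
    intro l h
    have hξl := hξpos l h
    simp only [condP]
    rw [← Finset.sum_div, hξcomp, div_self (ne_of_gt hξl)]
  have hms : ∀ l a, 0 < μ l → condP μ l a ≠ 0 → 0 < condP ξ l a := by
    intro l a hl hma
    have h1 : μ (l ++ [a]) ≠ 0 := by
      intro hc
      apply hma
      rw [condP, hc, zero_div]
    have h2 : 0 < μ (l ++ [a]) := lt_of_le_of_ne (hμnn _) (Ne.symm h1)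
    exact div_pos (hξpos _ h2) (hξpos l hl)
  -- the key pointwise inequality for each history
  have hkey : ∀ l : List A, 0 < μ l →
      (condP μ l (predμ l) - condP μ l (predξ l)) ^ 2 ≤
        2 * ((1 - condP μ l (predξ l)) + (1 - condP μ l (predμ l))) *
          (∑ a : A, condP μ l a * Real.log (condP μ l a / condP ξ l a)) := by
    intro l hl
    exact key_ineq (condP μ l) (condP ξ l) (hcond_nn l) (hconds_nn l)
      (hcond_sum l hl) (hconds_sum l hl) (fun a => hms l a hl)
      (predξ l) (predμ l) (hpredξ l) (hpredμ l)

  -- nonnegativity of the conditional KL sum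
  have hKLnn : ∀ l : List A, 0 < μ l →
      0 ≤ ∑ a : A, condP μ l a * Real.log (condP μ l a / condP ξ l a) := by
    intro l hl
    have e : ∑ a : A, condP μ l a * Real.log (condP μ l a / condP ξ l a)
        = ∑ a : A, phiKL (condP μ l a) (condP ξ l a) := by
      unfold phiKL
      rw [Finset.sum_add_distrib, Finset.sum_sub_distrib, hcond_sum l hl, hconds_sum l hl]
      ring
    rw [e]
    exact Finset.sum_nonneg fun a _ => phiKL_nonneg (hcond_nn l a) (hconds_nn l a) (hms l a hl)
  -- mass at each level
  have hmass : ∀ k : ℕ, ∑ x : Fin k → A, μ (List.ofFn x) = 1 := by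
    intro k
    induction k with
    | zero => simp [List.ofFn_zero, hμroot]
    | succ k ih =>
      rw [sum_ofFn_succ (fun l => μ l) k, Finset.sum_congr rfl fun x _ => hμcomp (List.ofFn x)]
      exact ih
  -- nonnegativity of error counts
  have hEnn : ∀ p : List A → A, 0 ≤ errE μ p n := by
    intro p
    rw [errE]
    refine Finset.sum_nonneg fun k _ => Finset.sum_nonneg fun x _ => ?_
    rcases eq_or_lt_of_le (hμnn (List.ofFn x)) with h0 | hpos
    · rw [← h0, zero_mul]
    · exact mul_nonneg (hμnn _)
        (by linarith [hcond_le_one (List.ofFn x) (p (List.ofFn x)) hpos])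
  -- nonnegativity of relative entropy
  have hHnn : 0 ≤ relEnt μ ξ n := by
    rw [relEnt]
    refine Finset.sum_nonneg fun k _ => Finset.sum_nonneg fun x _ => ?_
    rcases eq_or_lt_of_le (hμnn (List.ofFn x)) with h0 | hpos
    · rw [← h0, zero_mul]
    · exact mul_nonneg (hμnn _) (hKLnn (List.ofFn x) hpos)
  -- conjunct 1
  have hD0 : 0 ≤ errE μ predξ n - errE μ predμ n := by
    rw [errE, errE, ← Finset.sum_sub_distrib]
    refine Finset.sum_nonneg fun k _ => ?_
    rw [← Finset.sum_sub_distrib]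
    refine Finset.sum_nonneg fun x _ => ?_
    have h := hpredμ (List.ofFn x) (predξ (List.ofFn x))
    have e : μ (List.ofFn x) * (1 - condP μ (List.ofFn x) (predξ (List.ofFn x))) -
        μ (List.ofFn x) * (1 - condP μ (List.ofFn x) (predμ (List.ofFn x))) =
        μ (List.ofFn x) * (condP μ (List.ofFn x) (predμ (List.ofFn x)) -
          condP μ (List.ofFn x) (predξ (List.ofFn x))) := by ring
    rw [e]
    exact mul_nonneg (hμnn _) (by linarith)
  -- Cauchy–Schwarz setup on the sigma type
  set Sig : Finset (Σ k : ℕ, Fin k → A) :=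
    (Finset.range n).sigma (fun k => (Finset.univ : Finset (Fin k → A))) with hSig
  have hE1s : errE μ predξ n = ∑ σ ∈ Sig, μ (List.ofFn σ.2) *
      (1 - condP μ (List.ofFn σ.2) (predξ (List.ofFn σ.2))) := by
    rw [errE, hSig]
    exact Finset.sum_sigma' _ _ _
  have hE0s : errE μ predμ n = ∑ σ ∈ Sig, μ (List.ofFn σ.2) *
      (1 - condP μ (List.ofFn σ.2) (predμ (List.ofFn σ.2))) := by
    rw [errE, hSig]
    exact Finset.sum_sigma' _ _ _
  have hHs : relEnt μ ξ n = ∑ σ ∈ Sig, μ (List.ofFn σ.2) *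
      ∑ a : A, condP μ (List.ofFn σ.2) a *
        Real.log (condP μ (List.ofFn σ.2) a / condP ξ (List.ofFn σ.2) a) := by
    rw [relEnt, hSig]
    exact Finset.sum_sigma' _ _ _
  set uu : (Σ k : ℕ, Fin k → A) → ℝ := fun σ => μ (List.ofFn σ.2) *
      ((1 - condP μ (List.ofFn σ.2) (predξ (List.ofFn σ.2))) +
        (1 - condP μ (List.ofFn σ.2) (predμ (List.ofFn σ.2)))) with huu
  set vv : (Σ k : ℕ, Fin k → A) → ℝ := fun σ => 2 * (μ (List.ofFn σ.2) *
      ∑ a : A, condP μ (List.ofFn σ.2) a *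
        Real.log (condP μ (List.ofFn σ.2) a / condP ξ (List.ofFn σ.2) a)) with hvv
  have huu_nn : ∀ σ : (Σ k : ℕ, Fin k → A), 0 ≤ uu σ := by
    intro σ
    simp only [huu]
    rcases eq_or_lt_of_le (hμnn (List.ofFn σ.2)) with h0 | hpos
    · rw [← h0, zero_mul]
    · refine mul_nonneg (hμnn _) ?_
      have h1 := hcond_le_one (List.ofFn σ.2) (predξ (List.ofFn σ.2)) hpos
      have h2 := hcond_le_one (List.ofFn σ.2) (predμ (List.ofFn σ.2)) hpos
      linarith
  have hvv_nn : ∀ σ : (Σ k : ℕ, Fin k → A), 0 ≤ vv σ := by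
    intro σ
    simp only [hvv]
    rcases eq_or_lt_of_le (hμnn (List.ofFn σ.2)) with h0 | hpos
    · rw [← h0, zero_mul, mul_zero]
    · exact mul_nonneg (by norm_num) (mul_nonneg (hμnn _) (hKLnn (List.ofFn σ.2) hpos))
  have hterm : ∀ σ : (Σ k : ℕ, Fin k → A),
      μ (List.ofFn σ.2) * (condP μ (List.ofFn σ.2) (predμ (List.ofFn σ.2)) -
        condP μ (List.ofFn σ.2) (predξ (List.ofFn σ.2))) ≤
      Real.sqrt (uu σ) * Real.sqrt (vv σ) := by
    intro σ
    rcases eq_or_lt_of_le (hμnn (List.ofFn σ.2)) with h0 | hpos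
    · rw [← h0, zero_mul]
      exact mul_nonneg (Real.sqrt_nonneg _) (Real.sqrt_nonneg _)
    · have hk := hkey (List.ofFn σ.2) hpos
      have hr_nn : 0 ≤ μ (List.ofFn σ.2) * (condP μ (List.ofFn σ.2) (predμ (List.ofFn σ.2)) -
          condP μ (List.ofFn σ.2) (predξ (List.ofFn σ.2))) :=
        mul_nonneg (hμnn _) (by linarith [hpredμ (List.ofFn σ.2) (predξ (List.ofFn σ.2))])
      have hsqle : (μ (List.ofFn σ.2) * (condP μ (List.ofFn σ.2) (predμ (List.ofFn σ.2)) -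
          condP μ (List.ofFn σ.2) (predξ (List.ofFn σ.2)))) ^ 2 ≤ uu σ * vv σ := by
        have h2 := mul_le_mul_of_nonneg_left hk (sq_nonneg (μ (List.ofFn σ.2)))
        simp only [huu, hvv]
        nlinarith [h2]
      calc μ (List.ofFn σ.2) * (condP μ (List.ofFn σ.2) (predμ (List.ofFn σ.2)) -
            condP μ (List.ofFn σ.2) (predξ (List.ofFn σ.2)))
          = Real.sqrt ((μ (List.ofFn σ.2) * (condP μ (List.ofFn σ.2) (predμ (List.ofFn σ.2)) -
              condP μ (List.ofFn σ.2) (predξ (List.ofFn σ.2)))) ^ 2) :=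
            (Real.sqrt_sq hr_nn).symm
        _ ≤ Real.sqrt (uu σ * vv σ) := Real.sqrt_le_sqrt hsqle
        _ = Real.sqrt (uu σ) * Real.sqrt (vv σ) := Real.sqrt_mul (huu_nn σ) _
  have hD_eq : errE μ predξ n - errE μ predμ n = ∑ σ ∈ Sig,
      μ (List.ofFn σ.2) * (condP μ (List.ofFn σ.2) (predμ (List.ofFn σ.2)) -
        condP μ (List.ofFn σ.2) (predξ (List.ofFn σ.2))) := by
    rw [hE1s, hE0s, ← Finset.sum_sub_distrib]
    exact Finset.sum_congr rfl fun σ _ => by ring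
  have hZle : errE μ predξ n - errE μ predμ n ≤
      ∑ σ ∈ Sig, Real.sqrt (uu σ) * Real.sqrt (vv σ) := by
    rw [hD_eq]
    exact Finset.sum_le_sum fun σ _ => hterm σ
  have hCS := Finset.sum_mul_sq_le_sq_mul_sq Sig (fun σ => Real.sqrt (uu σ))
    (fun σ => Real.sqrt (vv σ))
  have e1 : ∑ σ ∈ Sig, Real.sqrt (uu σ) ^ 2 = ∑ σ ∈ Sig, uu σ :=
    Finset.sum_congr rfl fun σ _ => Real.sq_sqrt (huu_nn σ)
  have e2 : ∑ σ ∈ Sig, Real.sqrt (vv σ) ^ 2 = ∑ σ ∈ Sig, vv σ :=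
    Finset.sum_congr rfl fun σ _ => Real.sq_sqrt (hvv_nn σ)
  rw [e1, e2] at hCS
  have hsumu : ∑ σ ∈ Sig, uu σ = errE μ predξ n + errE μ predμ n := by
    rw [hE1s, hE0s, ← Finset.sum_add_distrib]
    exact Finset.sum_congr rfl fun σ _ => by simp only [huu]; ring
  have hsumv : ∑ σ ∈ Sig, vv σ = 2 * relEnt μ ξ n := by
    rw [hHs, Finset.mul_sum]
  rw [hsumu, hsumv] at hCS
  have hD2 : (errE μ predξ n - errE μ predμ n) ^ 2 ≤
      (errE μ predξ n + errE μ predμ n) * (2 * relEnt μ ξ n) := by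
    have hZnn : (0:ℝ) ≤ ∑ σ ∈ Sig, Real.sqrt (uu σ) * Real.sqrt (vv σ) :=
      Finset.sum_nonneg fun σ _ => mul_nonneg (Real.sqrt_nonneg _) (Real.sqrt_nonneg _)
    calc (errE μ predξ n - errE μ predμ n) ^ 2
        ≤ (∑ σ ∈ Sig, Real.sqrt (uu σ) * Real.sqrt (vv σ)) ^ 2 :=
          pow_le_pow_left₀ hD0 hZle 2
      _ ≤ _ := hCS
  -- conjunct 2
  have hconj2 : errE μ predξ n - errE μ predμ n ≤ relEnt μ ξ n +
      Real.sqrt (4 * errE μ predμ n * relEnt μ ξ n + (relEnt μ ξ n) ^ 2) := by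
    have hsq : (errE μ predξ n - errE μ predμ n - relEnt μ ξ n) ^ 2 ≤
        4 * errE μ predμ n * relEnt μ ξ n + (relEnt μ ξ n) ^ 2 := by nlinarith [hD2]
    have h1 : errE μ predξ n - errE μ predμ n - relEnt μ ξ n ≤
        Real.sqrt (4 * errE μ predμ n * relEnt μ ξ n + (relEnt μ ξ n) ^ 2) := by
      calc errE μ predξ n - errE μ predμ n - relEnt μ ξ n
          ≤ |errE μ predξ n - errE μ predμ n - relEnt μ ξ n| := le_abs_self _
        _ = Real.sqrt ((errE μ predξ n - errE μ predμ n - relEnt μ ξ n) ^ 2) :=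
            (Real.sqrt_sq_eq_abs _).symm
        _ ≤ _ := Real.sqrt_le_sqrt hsq
    linarith
  -- conjunct 3
  have hconj3 : relEnt μ ξ n +
      Real.sqrt (4 * errE μ predμ n * relEnt μ ξ n + (relEnt μ ξ n) ^ 2) ≤
      2 * relEnt μ ξ n + 2 * Real.sqrt (errE μ predμ n * relEnt μ ξ n) := by
    have hE0nn := hEnn predμ
    have hs1 : Real.sqrt (errE μ predμ n * relEnt μ ξ n) ^ 2 =
        errE μ predμ n * relEnt μ ξ n := Real.sq_sqrt (mul_nonneg hE0nn hHnn)
    have hle : 4 * errE μ predμ n * relEnt μ ξ n + (relEnt μ ξ n) ^ 2 ≤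
        (relEnt μ ξ n + 2 * Real.sqrt (errE μ predμ n * relEnt μ ξ n)) ^ 2 := by
      nlinarith [Real.sqrt_nonneg (errE μ predμ n * relEnt μ ξ n), hHnn]
    have h2 : Real.sqrt (4 * errE μ predμ n * relEnt μ ξ n + (relEnt μ ξ n) ^ 2) ≤
        relEnt μ ξ n + 2 * Real.sqrt (errE μ predμ n * relEnt μ ξ n) := by
      calc Real.sqrt (4 * errE μ predμ n * relEnt μ ξ n + (relEnt μ ξ n) ^ 2)
          ≤ Real.sqrt ((relEnt μ ξ n + 2 * Real.sqrt (errE μ predμ n * relEnt μ ξ n)) ^ 2) :=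
            Real.sqrt_le_sqrt hle
        _ = relEnt μ ξ n + 2 * Real.sqrt (errE μ predμ n * relEnt μ ξ n) :=
            Real.sqrt_sq (by positivity)
    linarith
  -- conjunct 4 : telescoping bound on relative entropy
  have htel : ∀ l : List A,
      ∑ a : A, μ (l ++ [a]) * Real.log (μ (l ++ [a]) / ξ (l ++ [a])) =
        μ l * Real.log (μ l / ξ l) +
          μ l * ∑ a : A, condP μ l a * Real.log (condP μ l a / condP ξ l a) := by
    intro l
    rcases eq_or_lt_of_le (hμnn l) with h0 | hpos
    · have hz : ∀ a : A, μ (l ++ [a]) = 0 :=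
        fun a => le_antisymm (le_trans (hμmono l a) (le_of_eq h0.symm)) (hμnn _)
      simp [hz, ← h0]
    · have hξl := hξpos l hpos
      have hptwise : ∀ a : A, μ (l ++ [a]) * Real.log (μ (l ++ [a]) / ξ (l ++ [a])) =
          μ (l ++ [a]) * Real.log (μ l / ξ l) +
            μ l * (condP μ l a * Real.log (condP μ l a / condP ξ l a)) := by
        intro a
        rcases eq_or_lt_of_le (hμnn (l ++ [a])) with h0a | hpa
        · rw [← h0a]
          simp [condP, ← h0a]
        · have hξa := hξpos (l ++ [a]) hpa
          simp only [condP]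
          have e1 : Real.log ((μ (l ++ [a]) / μ l) / (ξ (l ++ [a]) / ξ l)) =
              Real.log (μ (l ++ [a])) - Real.log (μ l) -
                (Real.log (ξ (l ++ [a])) - Real.log (ξ l)) := by
            rw [Real.log_div (by positivity) (by positivity),
              Real.log_div hpa.ne' hpos.ne', Real.log_div hξa.ne' hξl.ne']
          have e2 : Real.log (μ (l ++ [a]) / ξ (l ++ [a])) =
              Real.log (μ (l ++ [a])) - Real.log (ξ (l ++ [a])) :=
            Real.log_div hpa.ne' hξa.ne'
          have e3 : Real.log (μ l / ξ l) = Real.log (μ l) - Real.log (ξ l) :=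
            Real.log_div hpos.ne' hξl.ne'
          rw [e1, e2, e3]
          field_simp
          ring
      rw [Finset.sum_congr rfl fun a _ => hptwise a, Finset.sum_add_distrib,
        ← Finset.sum_mul, hμcomp, ← Finset.mul_sum]
  set Ffun : ℕ → ℝ := fun k => ∑ x : Fin k → A,
    μ (List.ofFn x) * Real.log (μ (List.ofFn x) / ξ (List.ofFn x)) with hF
  have hstepF : ∀ k : ℕ, Ffun (k + 1) = Ffun k + ∑ x : Fin k → A, μ (List.ofFn x) *
      ∑ a : A, condP μ (List.ofFn x) a *
        Real.log (condP μ (List.ofFn x) a / condP ξ (List.ofFn x) a) := by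
    intro k
    rw [hF]
    simp only
    rw [sum_ofFn_succ (fun l => μ l * Real.log (μ l / ξ l)) k,
      Finset.sum_congr rfl fun x _ => htel (List.ofFn x), Finset.sum_add_distrib]
  have hF0 : Ffun 0 = 0 := by
    rw [hF]
    simp [List.ofFn_zero, hμroot, hξroot]
  have hrel : relEnt μ ξ n = Ffun n := by
    have : relEnt μ ξ n = ∑ k ∈ Finset.range n, (Ffun (k + 1) - Ffun k) := by
      rw [relEnt]
      refine Finset.sum_congr rfl fun k _ => ?_
      rw [hstepF k]
      ring
    rw [this, Finset.sum_range_sub Ffun n, hF0, sub_zero]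
  have hconj4 : relEnt μ ξ n ≤ Real.log (1 / w i0) := by
    rw [hrel, hF]
    simp only
    calc ∑ x : Fin n → A, μ (List.ofFn x) * Real.log (μ (List.ofFn x) / ξ (List.ofFn x))
        ≤ ∑ x : Fin n → A, μ (List.ofFn x) * Real.log (1 / w i0) := by
          refine Finset.sum_le_sum fun x _ => ?_
          rcases eq_or_lt_of_le (hμnn (List.ofFn x)) with h0 | hpos
          · rw [← h0, zero_mul, zero_mul]
          · refine mul_le_mul_of_nonneg_left ?_ (hμnn _)
            refine Real.log_le_log (div_pos hpos (hξpos _ hpos)) ?_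
            rw [div_le_div_iff₀ (hξpos _ hpos) (hwpos i0)]
            calc μ (List.ofFn x) * w i0 = w i0 * μ (List.ofFn x) := by ring
              _ ≤ ξ (List.ofFn x) := hξdom _
              _ = 1 * ξ (List.ofFn x) := by ring
      _ = Real.log (1 / w i0) := by rw [← Finset.sum_mul, hmass n, one_mul]
  exact ⟨hD0, hconj2, hconj3, hconj4⟩
end

section
/- (Finite errors in deterministic environments) If μ is deterministic (assigns probability 1 to a single infinite sequence), then the universal predictor Θ_ξ makes at most 2·ln(1/w_μ) expected errors in total: E_{∞Θ_ξ} ≤ 2·H_∞ ≤ 2·ln(1/w_μ). -/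
open scoped BigOperators Classical

lemma mu_le_one' {A : Type} [Fintype A] (μ : List A → ℝ)
    (hnn : ∀ l, 0 ≤ μ l) (hroot : μ [] = 1)
    (hcompat : ∀ l, ∑ a : A, μ (l ++ [a]) = μ l) (l : List A) : μ l ≤ 1 := by
  induction l using List.reverseRecOn with
  | nil => exact le_of_eq hroot
  | append_singleton l a ih =>
      calc μ (l ++ [a]) ≤ ∑ b : A, μ (l ++ [b]) :=
        Finset.single_le_sum (fun b _ => hnn (l ++ [b])) (Finset.mem_univ a)
      _ = μ l := hcompat l
      _ ≤ 1 := ih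

/-- Finite errors in deterministic environments: if μ is concentrated on a single
sequence ω, then the universal predictor makes at most 2 H_n ≤ 2 ln(1/w_μ)
expected errors, uniformly in n. -/
theorem deterministic_error_bound {A : Type} [Fintype A]
    (μs : ℕ → List A → ℝ) (w : ℕ → ℝ)
    (hwpos : ∀ i, 0 < w i) (hwsum : HasSum w 1)
    (hnn : ∀ i l, 0 ≤ μs i l)
    (hroot : ∀ i, μs i [] = 1)
    (hcompat : ∀ i l, ∑ a : A, μs i (l ++ [a]) = μs i l)
    (ξ : List A → ℝ) (hξ : ∀ l, ξ l = ∑' i, w i * μs i l)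
    (i0 : ℕ)
    (ω : ℕ → A)
    (hdet : ∀ l : List A,
      μs i0 l = if l = List.ofFn (fun i : Fin l.length => ω i) then 1 else 0)
    (predξ : List A → A)
    (hpredξ : ∀ l a, condP ξ l a ≤ condP ξ l (predξ l)) :
    ∀ n : ℕ, errE (μs i0) predξ n ≤ 2 * relEnt (μs i0) ξ n ∧
      2 * relEnt (μs i0) ξ n ≤ 2 * Real.log (1 / w i0) := by

  -- basic facts
  have hsum : ∀ l, Summable (fun i => w i * μs i l) := fun l =>
    Summable.of_nonneg_of_le (fun i => mul_nonneg (hwpos i).le (hnn i l))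
      (fun i => mul_le_of_le_one_right (hwpos i).le
        (mu_le_one' (μs i) (hnn i) (hroot i) (hcompat i) l)) hwsum.summable
  have hξnn : ∀ l, 0 ≤ ξ l := fun l => by
    rw [hξ]; exact tsum_nonneg fun i => mul_nonneg (hwpos i).le (hnn i l)
  have hξcompat : ∀ l, ∑ a : A, ξ (l ++ [a]) = ξ l := by
    intro l
    simp only [hξ]
    rw [← Summable.tsum_finsetSum (fun a _ => hsum (l ++ [a]))]
    exact tsum_congr fun i => by rw [← Finset.mul_sum, hcompat]
  have hξge : ∀ l, w i0 * μs i0 l ≤ ξ l := fun l => by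
    rw [hξ]
    exact Summable.le_tsum (hsum l) i0 (fun i _ => mul_nonneg (hwpos i).le (hnn i l))
  have hξroot : ξ [] = 1 := by
    rw [hξ]
    have h : (fun i => w i * μs i []) = w := by funext i; rw [hroot i, mul_one]
    rw [h, hwsum.tsum_eq]
  -- prefix facts
  have hLsucc : ∀ k, List.ofFn (fun i : Fin k => ω i) ++ [ω k]
      = List.ofFn (fun i : Fin (k+1) => ω i) := by
    intro k; rw [List.ofFn_succ']; simp [List.concat_eq_append]
  have hμofFn : ∀ (k : ℕ) (x : Fin k → A),
      μs i0 (List.ofFn x) = if x = (fun i : Fin k => ω i) then 1 else 0 := by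
    intro k x
    rw [hdet]
    simp only [List.length_ofFn, Fin.coe_cast, List.ofFn_inj]
  have hμL : ∀ k, μs i0 (List.ofFn (fun i : Fin k => ω i)) = 1 := by
    intro k; rw [hμofFn]; simp
  have hξLpos : ∀ k, 0 < ξ (List.ofFn (fun i : Fin k => ω i)) :=
    fun k => by
      have h := hξge (List.ofFn (fun i : Fin k => ω i))
      rw [hμL k, mul_one] at h
      exact lt_of_lt_of_le (hwpos i0) h
  have hcondμ : ∀ k a, condP (μs i0) (List.ofFn (fun i : Fin k => ω i)) a
      = if a = ω k then 1 else 0 := by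
    intro k a
    unfold condP
    rw [hμL k, div_one, hdet]
    have hlen : (List.ofFn (fun i : Fin k => ω i) ++ [a]).length = k + 1 := by simp
    simp only [hlen, Fin.coe_cast]
    rw [← hLsucc k]
    simp
  -- condP ξ facts
  have hcξnn : ∀ k a, 0 ≤ condP ξ (List.ofFn (fun i : Fin k => ω i)) a := fun k a =>
    div_nonneg (hξnn _) (hξLpos k).le
  have hcξsum : ∀ k, ∑ a : A, condP ξ (List.ofFn (fun i : Fin k => ω i)) a = 1 := by
    intro k
    unfold condP
    rw [← Finset.sum_div, hξcompat, div_self (hξLpos k).ne']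
  have hcξle : ∀ k a, condP ξ (List.ofFn (fun i : Fin k => ω i)) a ≤ 1 := by
    intro k a
    rw [← hcξsum k]
    exact Finset.single_le_sum (fun b _ => hcξnn k b) (Finset.mem_univ a)
  have hcpos : ∀ k, 0 < condP ξ (List.ofFn (fun i : Fin k => ω i)) (ω k) := by
    intro k
    unfold condP
    exact div_pos (by rw [hLsucc k]; exact hξLpos (k+1)) (hξLpos k)
  -- rewriting errE
  have herr : ∀ n, errE (μs i0) predξ n = ∑ k ∈ Finset.range n,
      (if predξ (List.ofFn (fun i : Fin k => ω i)) = ω k then (0:ℝ) else 1) := by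
    intro n
    unfold errE
    refine Finset.sum_congr rfl fun k _ => ?_
    rw [Finset.sum_eq_single (fun i : Fin k => ω i)]
    · rw [hμL k, hcondμ k, one_mul]
      split_ifs <;> norm_num
    · intro x _ hx
      rw [hμofFn k x, if_neg hx, zero_mul]
    · intro h; exact absurd (Finset.mem_univ _) h
  -- rewriting relEnt
  have hrel : ∀ n, relEnt (μs i0) ξ n = ∑ k ∈ Finset.range n,
      -Real.log (condP ξ (List.ofFn (fun i : Fin k => ω i)) (ω k)) := by
    intro n
    unfold relEnt
    refine Finset.sum_congr rfl fun k _ => ?_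
    rw [Finset.sum_eq_single (fun i : Fin k => ω i)]
    · rw [hμL k, one_mul]
      rw [Finset.sum_eq_single (ω k)]
      · rw [hcondμ, if_pos rfl, one_mul, one_div, Real.log_inv]
      · intro a _ ha
        rw [hcondμ, if_neg ha, zero_mul]
      · intro h; exact absurd (Finset.mem_univ _) h
    · intro x _ hx; rw [hμofFn k x, if_neg hx, zero_mul]
    · intro h; exact absurd (Finset.mem_univ _) h
  -- telescoping
  have htel : ∀ n, ∑ k ∈ Finset.range n,
      -Real.log (condP ξ (List.ofFn (fun i : Fin k => ω i)) (ω k))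
      = -Real.log (ξ (List.ofFn (fun i : Fin n => ω i))) := by
    intro n
    induction n with
    | zero => simp [hξroot]
    | succ n ih =>
        rw [Finset.sum_range_succ, ih]
        unfold condP
        rw [hLsucc n, Real.log_div (hξLpos (n+1)).ne' (hξLpos n).ne']
        ring
  intro n
  constructor
  · rw [herr n, hrel n, Finset.mul_sum]
    refine Finset.sum_le_sum fun k _ => ?_
    by_cases hp : predξ (List.ofFn (fun i : Fin k => ω i)) = ω k
    · rw [if_pos hp]
      have h0 : Real.log (condP ξ (List.ofFn (fun i : Fin k => ω i)) (ω k)) ≤ 0 :=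
        Real.log_nonpos (hcpos k).le (hcξle k _)
      linarith
    · rw [if_neg hp]
      have hb : condP ξ (List.ofFn (fun i : Fin k => ω i)) (ω k)
          ≤ condP ξ (List.ofFn (fun i : Fin k => ω i))
            (predξ (List.ofFn (fun i : Fin k => ω i))) := hpredξ _ _
      have hpair : condP ξ (List.ofFn (fun i : Fin k => ω i)) (ω k)
          + condP ξ (List.ofFn (fun i : Fin k => ω i))
            (predξ (List.ofFn (fun i : Fin k => ω i))) ≤ 1 := by
        have hss := Finset.sum_le_sum_of_subset_of_nonneg
          (Finset.subset_univ ({ω k, predξ (List.ofFn (fun i : Fin k => ω i))} : Finset A))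
          (fun b _ _ => hcξnn k b)
        rw [Finset.sum_pair (Ne.symm hp), hcξsum k] at hss
        exact hss
      have hhalf : condP ξ (List.ofFn (fun i : Fin k => ω i)) (ω k) ≤ 1/2 := by linarith
      have hlog : Real.log (condP ξ (List.ofFn (fun i : Fin k => ω i)) (ω k))
          ≤ -Real.log 2 := by
        have h := Real.log_le_log (hcpos k) hhalf
        rwa [one_div, Real.log_inv] at h
      have h2 : (0.6931471803 : ℝ) < Real.log 2 := Real.log_two_gt_d9
      linarith
  · rw [hrel n, htel n]
    have hw : w i0 ≤ ξ (List.ofFn (fun i : Fin n => ω i)) := by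
      have h := hξge (List.ofFn (fun i : Fin n => ω i))
      rwa [hμL n, mul_one] at h
    have hlog := Real.log_le_log (hwpos i0) hw
    rw [one_div, Real.log_inv]
    linarith
end
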